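/- arXiv:2107.09994 — 6 statements merged into one kernel-verified Lean document; each statement's English description precedes it below -/
import Mathlib

section
/- Let F be a class of simple finite graphs closed under taking subgraphs. If every graph G in F satisfies χ''(G) ≤ Δ(G) + 2 (i.e., the Total Coloring Conjecture holds for F), then every total graph T(G) with G in F satisfies Hadwiger's conjecture, i.e., χ(T(G)) ≤ η(T(G)). -/
open SimpleGraph

/-- The total graph `T(G)` of a simple graph `G`: its vertices are the vertices and edges
of `G`, with two elements adjacent iff they are adjacent or incident in `G`. -/
def totalGraph {V : Type*} (G : SimpleGraph V) : SimpleGraph (V ⊕ G.edgeSet) :=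
  SimpleGraph.fromRel fun x y =>
    match x, y with
    | Sum.inl u, Sum.inl v => G.Adj u v
    | Sum.inl u, Sum.inr e => u ∈ (e : Sym2 V)
    | Sum.inr e, Sum.inl u => u ∈ (e : Sym2 V)
    | Sum.inr e, Sum.inr f => ∃ u, u ∈ (e : Sym2 V) ∧ u ∈ (f : Sym2 V)

/-- `cv`, `ce` form a total coloring of `G`: adjacent vertices get distinct colors, edges
sharing an endpoint get distinct colors, and every edge gets a color distinct from the colors
of both of its endpoints. -/
def IsTotalColoring {V : Type*} (G : SimpleGraph V) (cv : V → ℕ) (ce : Sym2 V → ℕ) : Prop :=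
  (∀ ⦃u v⦄, G.Adj u v → cv u ≠ cv v) ∧
  (∀ ⦃u v w⦄, G.Adj u v → G.Adj u w → v ≠ w → ce s(u, v) ≠ ce s(u, w)) ∧
  (∀ ⦃u v⦄, G.Adj u v → ce s(u, v) ≠ cv u ∧ ce s(u, v) ≠ cv v)

/-- The total chromatic number `χ''(G)`: the least `k` such that `G` has a total coloring
using colors `0, …, k-1`. -/
noncomputable def totalChromaticNumber {V : Type*} (G : SimpleGraph V) : ℕ :=
  sInf {k | ∃ cv ce, IsTotalColoring G cv ce ∧ (∀ v, cv v < k) ∧ ∀ e ∈ G.edgeSet, ce e < k}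

/-- `H` has a minor isomorphic to `K`: there are pairwise disjoint nonempty branch sets,
one for each vertex of `K`, each inducing a connected subgraph of `H`, with an edge of `H`
between the branch sets of any two adjacent vertices of `K`. -/
def HasMinor {W U : Type*} (H : SimpleGraph W) (K : SimpleGraph U) : Prop :=
  ∃ B : U → Set W,
    (∀ i, (B i).Nonempty) ∧
    (Pairwise fun i j => Disjoint (B i) (B j)) ∧
    (∀ i, (H.induce (B i)).Connected) ∧
    ∀ ⦃i j⦄, K.Adj i j → ∃ u ∈ B i, ∃ v ∈ B j, H.Adj u v

/-- `H` has a clique minor of order `t` (a `K_t`-minor): `t` pairwise disjoint nonempty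
vertex subsets, each inducing a connected subgraph, with an edge between every pair. -/
def HasCliqueMinor {W : Type*} (H : SimpleGraph W) (t : ℕ) : Prop :=
  ∃ B : Fin t → Set W,
    (∀ i, (B i).Nonempty) ∧
    (Pairwise fun i j => Disjoint (B i) (B j)) ∧
    (∀ i, (H.induce (B i)).Connected) ∧
    Pairwise fun i j => ∃ u ∈ B i, ∃ v ∈ B j, H.Adj u v

/-- The Hadwiger number `η(H)`: the largest `t` such that `H` has a `K_t`-minor. -/
noncomputable def hadwigerNumber {W : Type*} (H : SimpleGraph W) : ℕ :=
  sSup {t | HasCliqueMinor H t}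

/-- A graph is `c`-vertex-connected if it has more than `c` vertices and deleting any set of
fewer than `c` vertices leaves a connected graph. -/
def IsKConnected {V : Type*} [Fintype V] (c : ℕ) (G : SimpleGraph V) : Prop :=
  c < Fintype.card V ∧
    ∀ S : Finset V, S.card < c → (G.induce ((S : Set V)ᶜ)).Connected

/-- `G` is planar (Wagner's characterization): `G` has neither a `K₅`-minor nor a
`K₃,₃`-minor. -/
def IsPlanar {V : Type*} (G : SimpleGraph V) : Prop :=
  ¬ HasMinor G (⊤ : SimpleGraph (Fin 5)) ∧
  ¬ HasMinor G (completeBipartiteGraph (Fin 3) (Fin 3))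

/-- `c` is a proper edge coloring of `G`: edges sharing an endpoint get distinct colors. -/
def IsProperEdgeColoring {V : Type*} (G : SimpleGraph V) (c : Sym2 V → ℕ) : Prop :=
  ∀ ⦃u v w⦄, G.Adj u v → G.Adj u w → v ≠ w → c s(u, v) ≠ c s(u, w)

/-- The chromatic index `χ'(G)`: the least `k` such that `G` has a proper edge coloring
using colors `0, …, k-1`. -/
noncomputable def chromaticIndex {V : Type*} (G : SimpleGraph V) : ℕ :=
  sInf {k | ∃ c : Sym2 V → ℕ, IsProperEdgeColoring G c ∧ ∀ e ∈ G.edgeSet, c e < k}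

/-- `G` is `k`-edge-choosable: for every assignment of a list of `k` colors to each edge
there is a proper edge coloring choosing each edge's color from its list. -/
def EdgeChoosable {V : Type*} (G : SimpleGraph V) (k : ℕ) : Prop :=
  ∀ L : Sym2 V → Finset ℕ, (∀ e ∈ G.edgeSet, (L e).card = k) →
    ∃ c : Sym2 V → ℕ, IsProperEdgeColoring G c ∧ ∀ e ∈ G.edgeSet, c e ∈ L e

/-- The edge choosability `ch'(G)`: the least `k` such that `G` is `k`-edge-choosable. -/
noncomputable def edgeChoosability {V : Type*} (G : SimpleGraph V) : ℕ :=
  sInf {k | EdgeChoosable G k}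

/-- The subdivision of `H`: every edge `uv` is replaced by a path `u – w_{uv} – v` through
a new vertex `w_{uv}` corresponding to that edge. -/
def subdivision {V : Type*} (H : SimpleGraph V) : SimpleGraph (V ⊕ H.edgeSet) :=
  SimpleGraph.fromRel fun x y =>
    match x, y with
    | Sum.inl u, Sum.inr e => u ∈ (e : Sym2 V)
    | _, _ => False

/-- The square `G²` of `G`: two distinct vertices are adjacent iff their distance in `G`
is at most `2`, i.e. they are adjacent or have a common neighbour. -/
def squareGraph {V : Type*} (G : SimpleGraph V) : SimpleGraph V :=
  SimpleGraph.fromRel fun u v => G.Adj u v ∨ ∃ w, G.Adj u w ∧ G.Adj w v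

universe u


section AuxBasic

universe v₁

variable {V : Type v₁}

/-- The set of admissible total-coloring sizes is nonempty. -/
lemma totalColoring_set_nonempty [Fintype V] (G : SimpleGraph V) :
    {k | ∃ cv ce, IsTotalColoring G cv ce ∧ (∀ v, cv v < k) ∧
      ∀ e ∈ G.edgeSet, ce e < k}.Nonempty := by
  classical
  refine ⟨Fintype.card V + Fintype.card (Sym2 V),
    fun v => ((Fintype.equivFin V) v : ℕ),
    fun e => Fintype.card V + ((Fintype.equivFin (Sym2 V)) e : ℕ), ⟨?_, ?_, ?_⟩, ?_, ?_⟩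
  · intro u v h hc
    dsimp only at hc
    exact h.ne ((Fintype.equivFin V).injective (Fin.ext hc))
  · intro u v w _ _ hvw hc
    dsimp only at hc
    have : s(u, v) = s(u, w) := by
      have := Nat.add_left_cancel hc
      exact (Fintype.equivFin (Sym2 V)).injective (Fin.ext this)
    exact hvw (Sym2.congr_right.mp this)
  · intro u v _
    constructor
    · intro hc
      dsimp only at hc
      have h1 : ((Fintype.equivFin V) u : ℕ) < Fintype.card V := Fin.is_lt _
      omega
    · intro hc
      dsimp only at hc
      have h1 : ((Fintype.equivFin V) v : ℕ) < Fintype.card V := Fin.is_lt _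
      omega
  · intro v
    dsimp only
    have h1 : ((Fintype.equivFin V) v : ℕ) < Fintype.card V := Fin.is_lt _
    omega
  · intro e _
    dsimp only
    have h1 : ((Fintype.equivFin (Sym2 V)) e : ℕ) < Fintype.card (Sym2 V) := Fin.is_lt _
    omega

lemma totalChromaticNumber_le_of {G : SimpleGraph V} {M : ℕ} (cv : V → ℕ) (ce : Sym2 V → ℕ)
    (hc : IsTotalColoring G cv ce) (h1 : ∀ v, cv v < M) (h2 : ∀ e ∈ G.edgeSet, ce e < M) :
    totalChromaticNumber G ≤ M :=
  Nat.sInf_le ⟨cv, ce, hc, h1, h2⟩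

lemma exists_totalColoring_lt [Fintype V] (G : SimpleGraph V) {M : ℕ}
    (h : totalChromaticNumber G ≤ M) :
    ∃ cv ce, IsTotalColoring G cv ce ∧ (∀ v, cv v < M) ∧ ∀ e ∈ G.edgeSet, ce e < M := by
  obtain ⟨cv, ce, hc, h1, h2⟩ := Nat.sInf_mem (totalColoring_set_nonempty G)
  exact ⟨cv, ce, hc, fun v => lt_of_lt_of_le (h1 v) h, fun e he => lt_of_lt_of_le (h2 e he) h⟩

/-- adjacency constructors for the total graph -/
lemma tg_adj_inl_inl {G : SimpleGraph V} {a b : V} (h : G.Adj a b) :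
    (totalGraph G).Adj (Sum.inl a) (Sum.inl b) := by
  rw [totalGraph, fromRel_adj]
  exact ⟨by simp [h.ne], Or.inl h⟩

lemma tg_adj_inl_inr {G : SimpleGraph V} {a : V} {e : G.edgeSet} (h : a ∈ (e : Sym2 V)) :
    (totalGraph G).Adj (Sum.inl a) (Sum.inr e) := by
  rw [totalGraph, fromRel_adj]
  exact ⟨by simp, Or.inl h⟩

lemma tg_adj_inr_inr {G : SimpleGraph V} {e f : G.edgeSet} (hne : e ≠ f) {a : V}
    (ha : a ∈ (e : Sym2 V)) (hb : a ∈ (f : Sym2 V)) :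
    (totalGraph G).Adj (Sum.inr e) (Sum.inr f) := by
  rw [totalGraph, fromRel_adj]
  exact ⟨by simp [hne], Or.inl ⟨a, ha, hb⟩⟩

lemma totalGraph_colorable [Fintype V] {G : SimpleGraph V} {k : ℕ} (cv : V → ℕ)
    (ce : Sym2 V → ℕ) (hc : IsTotalColoring G cv ce) (h1 : ∀ v, cv v < k)
    (h2 : ∀ e ∈ G.edgeSet, ce e < k) : (totalGraph G).Colorable k := by
  refine ⟨SimpleGraph.Coloring.mk
    (Sum.elim (fun v => (⟨cv v, h1 v⟩ : Fin k)) (fun e => ⟨ce (e : Sym2 V), h2 _ e.2⟩)) ?_⟩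
  rintro x y hadj
  rw [totalGraph, fromRel_adj] at hadj
  obtain ⟨hne, hrel⟩ := hadj
  match x, y with
  | Sum.inl a, Sum.inl b =>
    have hab : G.Adj a b := by
      rcases hrel with h | h
      · exact h
      · exact G.adj_symm h
    simp only [Sum.elim_inl]
    exact fun hh => hc.1 hab (congrArg Fin.val hh)
  | Sum.inl a, Sum.inr e =>
    have ha : a ∈ (e : Sym2 V) := by rcases hrel with h | h <;> exact h
    obtain ⟨b, hb⟩ := Sym2.mem_iff_exists.mp ha
    have hab : G.Adj a b := G.mem_edgeSet.mp (by rw [← hb]; exact e.2)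
    simp only [Sum.elim_inl, Sum.elim_inr]
    intro hh
    exact (hc.2.2 hab).1 (by rw [← hb] at *; exact (congrArg Fin.val hh).symm)
  | Sum.inr e, Sum.inl a =>
    have ha : a ∈ (e : Sym2 V) := by rcases hrel with h | h <;> exact h
    obtain ⟨b, hb⟩ := Sym2.mem_iff_exists.mp ha
    have hab : G.Adj a b := G.mem_edgeSet.mp (by rw [← hb]; exact e.2)
    simp only [Sum.elim_inl, Sum.elim_inr]
    intro hh
    exact (hc.2.2 hab).1 (by rw [← hb] at *; exact congrArg Fin.val hh)
  | Sum.inr e, Sum.inr f =>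
    have hef : e ≠ f := fun h => hne (by rw [h])
    have hrel' : ∃ a, a ∈ (e : Sym2 V) ∧ a ∈ (f : Sym2 V) := by
      rcases hrel with h | h
      · exact h
      · obtain ⟨a, h1', h2'⟩ := h; exact ⟨a, h2', h1'⟩
    obtain ⟨a, hae, haf⟩ := hrel'
    obtain ⟨b, hb⟩ := Sym2.mem_iff_exists.mp hae
    obtain ⟨c, hcc⟩ := Sym2.mem_iff_exists.mp haf
    have hab : G.Adj a b := G.mem_edgeSet.mp (by rw [← hb]; exact e.2)
    have hac : G.Adj a c := G.mem_edgeSet.mp (by rw [← hcc]; exact f.2)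
    have hbc : b ≠ c := by
      rintro rfl
      exact hef (Subtype.ext (by rw [hb, hcc]))
    simp only [Sum.elim_inr]
    intro hh
    exact hc.2.1 hab hac hbc (by rw [← hb, ← hcc] at *; exact congrArg Fin.val hh)

end AuxBasic
section AuxMinor

universe v₂

variable {W : Type v₂}

lemma hasCliqueMinor_zero (H : SimpleGraph W) : HasCliqueMinor H 0 :=
  ⟨fun i => i.elim0, fun i => i.elim0, fun i => i.elim0, fun i => i.elim0, fun i => i.elim0⟩

lemma HasCliqueMinor.mono {H : SimpleGraph W} {s t : ℕ} (hst : s ≤ t)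
    (h : HasCliqueMinor H t) : HasCliqueMinor H s := by
  obtain ⟨B, h1, h2, h3, h4⟩ := h
  exact ⟨fun i => B (Fin.castLE hst i), fun i => h1 _,
    fun i j hij => h2 ((Fin.castLE_injective hst).ne hij), fun i => h3 _,
    fun i j hij => h4 ((Fin.castLE_injective hst).ne hij)⟩

lemma hasCliqueMinor_of_index {ι : Type v₂} [Fintype ι] (H : SimpleGraph W) (B : ι → Set W)
    (h1 : ∀ i, (B i).Nonempty) (h2 : Pairwise fun i j => Disjoint (B i) (B j))
    (h3 : ∀ i, (H.induce (B i)).Connected)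
    (h4 : Pairwise fun i j => ∃ u ∈ B i, ∃ v ∈ B j, H.Adj u v) :
    HasCliqueMinor H (Fintype.card ι) := by
  let e := (Fintype.equivFin ι).symm
  exact ⟨fun i => B (e i), fun i => h1 _, fun i j hij => h2 (e.injective.ne hij),
    fun i => h3 _, fun i j hij => h4 (e.injective.ne hij)⟩

lemma hasCliqueMinor_le_card [Fintype W] {H : SimpleGraph W} {t : ℕ}
    (h : HasCliqueMinor H t) : t ≤ Fintype.card W := by
  obtain ⟨B, h1, h2, -, -⟩ := h
  choose f hf using h1
  have hinj : Function.Injective f := by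
    intro i j hij
    by_contra hne
    exact Set.disjoint_left.mp (h2 hne) (hf i) (hij ▸ hf j)
  simpa using Fintype.card_le_of_injective f hinj

lemma le_hadwigerNumber [Fintype W] (H : SimpleGraph W) (t : ℕ) (h : HasCliqueMinor H t) :
    t ≤ hadwigerNumber H :=
  le_csSup ⟨Fintype.card W, fun _ ht => hasCliqueMinor_le_card ht⟩ h

lemma connected_induce_singleton (H : SimpleGraph W) (x : W) :
    (H.induce {x}).Connected := by
  haveI : Nonempty ({x} : Set W) := ⟨⟨x, rfl⟩⟩
  constructor
  intro a b
  have : a = b := Subtype.ext (by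
    have ha : (a : W) ∈ ({x} : Set W) := a.2
    have hb : (b : W) ∈ ({x} : Set W) := b.2
    simp only [Set.mem_singleton_iff] at ha hb
    rw [ha, hb])
  exact this ▸ SimpleGraph.Reachable.refl _

end AuxMinor

section AuxDeg

universe v₃
variable {V : Type v₃}

/-- max degree with a canonical (classical) instance. -/
noncomputable def mdeg [Fintype V] (H : SimpleGraph V) : ℕ :=
  @SimpleGraph.maxDegree V H _ (Classical.decRel _)

lemma maxDegree_inst_irrel [Fintype V] (H : SimpleGraph V) (i1 i2 : DecidableRel H.Adj) :
    @SimpleGraph.maxDegree V H _ i1 = @SimpleGraph.maxDegree V H _ i2 := by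
  have : i1 = i2 := by funext a b; exact Subsingleton.elim _ _
  rw [this]

lemma mdeg_eq [Fintype V] (H : SimpleGraph V) (i1 : DecidableRel H.Adj) :
    mdeg H = @SimpleGraph.maxDegree V H _ i1 :=
  maxDegree_inst_irrel H _ _

lemma mdeg_mono [Fintype V] {H G : SimpleGraph V} (h : H ≤ G) : mdeg H ≤ mdeg G := by
  classical
  rw [mdeg_eq H (Classical.decRel _), mdeg_eq G (Classical.decRel _)]
  apply SimpleGraph.maxDegree_le_of_forall_degree_le
  intro v
  have h1 : H.degree v ≤ G.degree v := by
    apply Finset.card_le_card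
    intro w hw
    rw [SimpleGraph.mem_neighborFinset] at hw ⊢
    exact h hw
  exact h1.trans (SimpleGraph.degree_le_maxDegree _ _)

end AuxDeg
section AuxTransfer

universe u₂
variable {V : Type u₂} [Fintype V]

lemma tcc_of_closed (F : ∀ {V : Type u₂}, SimpleGraph V → Prop)
    (hclosed : ∀ {V : Type u₂} [Fintype V] (G : SimpleGraph V),
      F G → ∀ G' : G.Subgraph, F G'.coe)
    (hTCC : ∀ {V : Type u₂} [Fintype V] (G : SimpleGraph V) [DecidableRel G.Adj],
      F G → totalChromaticNumber G ≤ G.maxDegree + 2)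
    (G : SimpleGraph V) (hG : F G) (H : SimpleGraph V) (hle : H ≤ G) :
    totalChromaticNumber H ≤ mdeg H + 2 := by
  classical
  set Gs : G.Subgraph :=
    { verts := Set.univ
      Adj := H.Adj
      adj_sub := fun h => hle h
      edge_vert := fun _ => trivial
      symm := ⟨fun a b h => H.adj_symm h⟩ } with hGs
  have hF : F Gs.coe := hclosed G hG Gs
  haveI : DecidableRel Gs.coe.Adj := Classical.decRel _
  have h1 : totalChromaticNumber Gs.coe ≤ Gs.coe.maxDegree + 2 := hTCC Gs.coe hF
  obtain ⟨cv, ce, hc, hb1, hb2⟩ := exists_totalColoring_lt Gs.coe le_rfl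
  set ι : V → Gs.verts := fun v => ⟨v, trivial⟩ with hι
  have hadj : ∀ {a b : V}, H.Adj a b → Gs.coe.Adj (ι a) (ι b) := fun h => h
  have h2 : totalChromaticNumber H ≤ totalChromaticNumber Gs.coe := by
    apply totalChromaticNumber_le_of (fun v => cv (ι v)) (fun e => ce (Sym2.map ι e))
    · refine ⟨?_, ?_, ?_⟩
      · intro a b h
        exact hc.1 (hadj h)
      · intro a b c hab hac hbc
        dsimp only
        rw [Sym2.map_pair_eq, Sym2.map_pair_eq]
        exact hc.2.1 (hadj hab) (hadj hac) (fun hh => hbc (congrArg Subtype.val hh))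
      · intro a b h
        dsimp only
        rw [Sym2.map_pair_eq]
        exact hc.2.2 (hadj h)
    · intro v; exact hb1 _
    · intro e
      induction e using Sym2.ind with
      | _ x y =>
        intro he
        have hxy : H.Adj x y := H.mem_edgeSet.mp he
        rw [Sym2.map_pair_eq]
        exact hb2 _ (Gs.coe.mem_edgeSet.mpr (hadj hxy))
  have h3 : Gs.coe.maxDegree ≤ mdeg H := by
    rw [mdeg_eq H (Classical.decRel _)]
    apply SimpleGraph.maxDegree_le_of_forall_degree_le
    intro a
    have hdeg : (Gs.coe.neighborFinset a).card ≤ (H.neighborFinset (a : V)).card := by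
      refine Finset.card_le_card_of_injOn (fun (b : ↑Gs.verts) => (b : V)) ?_ ?_
      · intro b hb
        rw [Finset.mem_coe, SimpleGraph.mem_neighborFinset] at hb ⊢
        exact hb
      · intro b _ c _ h; exact Subtype.ext h
    exact hdeg.trans (SimpleGraph.degree_le_maxDegree _ _)
  omega

end AuxTransfer

section AuxPerm

/-- an injection of `[0,N)` into itself sending `a` to `b` and `s` outside `F`. -/
lemma exists_good_injection (N a b : ℕ) (s F : Finset ℕ) (ha : a < N) (hb : b ∈ F)
    (hs : ∀ x ∈ s, x < N) (hF : ∀ x ∈ F, x < N) (has : a ∉ s)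
    (hcard : s.card + F.card ≤ N) :
    ∃ π : ℕ → ℕ, (∀ x, x < N → π x < N) ∧
      (∀ x y, x < N → y < N → π x = π y → x = y) ∧
      π a = b ∧ ∀ x ∈ s, π x ∉ F := by
  classical
  have hbN : b < N := hF b hb
  have hFsub : F ⊆ Finset.range N := fun x hx => Finset.mem_range.mpr (hF x hx)
  have hssub : s ⊆ Finset.range N := fun x hx => Finset.mem_range.mpr (hs x hx)
  have hFcard : 1 ≤ F.card := Finset.card_pos.mpr ⟨b, hb⟩
  set pool : Finset ℕ := Finset.range N \ F with hpool
  have hpoolcard : s.card ≤ pool.card := by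
    rw [hpool, Finset.card_sdiff_of_subset hFsub, Finset.card_range]
    omega
  obtain ⟨σ⟩ : Nonempty ({x // x ∈ s} ↪ {x // x ∈ pool}) := by
    apply Function.Embedding.nonempty_of_card_le
    rwa [Fintype.card_coe, Fintype.card_coe]
  set σ' : ℕ → ℕ := fun x => if h : x ∈ s then (σ ⟨x, h⟩ : ℕ) else x with hσ'
  have hσ'pool : ∀ x ∈ s, σ' x ∈ pool := by
    intro x hx
    rw [hσ']; dsimp only
    rw [dif_pos hx]
    exact (σ ⟨x, hx⟩).2
  have hσ'inj : ∀ x ∈ s, ∀ y ∈ s, σ' x = σ' y → x = y := by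
    intro x hx y hy hxy
    rw [hσ'] at hxy; dsimp only at hxy
    rw [dif_pos hx, dif_pos hy] at hxy
    have := σ.injective (Subtype.ext hxy)
    exact congrArg Subtype.val this
  set simg : Finset ℕ := s.image σ' with hsimg
  have hsimgcard : simg.card = s.card := Finset.card_image_of_injOn hσ'inj
  have hsimgpool : simg ⊆ pool := by
    intro x hx
    obtain ⟨y, hy, rfl⟩ := Finset.mem_image.mp hx
    exact hσ'pool y hy
  have hbnotin : b ∉ simg := fun hbs => (Finset.mem_sdiff.mp (hsimgpool hbs)).2 hb
  set D : Finset ℕ := Finset.range N \ insert a s with hD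
  set E : Finset ℕ := Finset.range N \ insert b simg with hE
  have hDcard : D.card = N - (s.card + 1) := by
    rw [hD, Finset.card_sdiff_of_subset (by
      intro x hx
      rcases Finset.mem_insert.mp hx with rfl | hx
      · exact Finset.mem_range.mpr ha
      · exact hssub hx)]
    rw [Finset.card_insert_of_notMem has, Finset.card_range]
  have hEcard : E.card = N - (s.card + 1) := by
    rw [hE, Finset.card_sdiff_of_subset (by
      intro x hx
      rcases Finset.mem_insert.mp hx with rfl | hx
      · exact Finset.mem_range.mpr hbN
      · exact (Finset.mem_sdiff.mp (hsimgpool hx)).1)]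
    rw [Finset.card_insert_of_notMem hbnotin, Finset.card_range, hsimgcard]
  have hcardDE : Fintype.card {x // x ∈ D} = Fintype.card {x // x ∈ E} := by
    rw [Fintype.card_coe, Fintype.card_coe, hDcard, hEcard]
  set τ : {x // x ∈ D} ≃ {x // x ∈ E} := Fintype.equivOfCardEq hcardDE with hτ
  set π : ℕ → ℕ := fun x =>
    if x = a then b
    else if h : x ∈ s then σ' x
    else if h2 : x ∈ D then (τ ⟨x, h2⟩ : ℕ)
    else x with hπ
  have hπa : π a = b := by rw [hπ]; dsimp only; rw [if_pos rfl]
  have hmemD : ∀ x, x < N → x ≠ a → x ∉ s → x ∈ D := by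
    intro x hx hxa hxs
    rw [hD, Finset.mem_sdiff]
    refine ⟨Finset.mem_range.mpr hx, ?_⟩
    rw [Finset.mem_insert]
    rintro (rfl | hc)
    · exact hxa rfl
    · exact hxs hc
  have hπval : ∀ x, x < N →
      (x = a ∧ π x = b) ∨ (x ≠ a ∧ x ∈ s ∧ π x = σ' x) ∨
      (x ≠ a ∧ x ∉ s ∧ ∃ h2 : x ∈ D, π x = (τ ⟨x, h2⟩ : ℕ)) := by
    intro x hx
    by_cases hxa : x = a
    · subst hxa; exact Or.inl ⟨rfl, hπa⟩
    · by_cases hxs : x ∈ s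
      · refine Or.inr (Or.inl ⟨hxa, hxs, ?_⟩)
        rw [hπ]; dsimp only; rw [if_neg hxa, dif_pos hxs]
      · refine Or.inr (Or.inr ⟨hxa, hxs, hmemD x hx hxa hxs, ?_⟩)
        rw [hπ]; dsimp only; rw [if_neg hxa, dif_neg hxs, dif_pos (hmemD x hx hxa hxs)]
  have hπs : ∀ x ∈ s, π x ∉ F := by
    intro x hx
    have hxa : x ≠ a := fun h => has (h ▸ hx)
    have : π x = σ' x := by rw [hπ]; dsimp only; rw [if_neg hxa, dif_pos hx]
    rw [this]
    exact fun hcF => (Finset.mem_sdiff.mp (hσ'pool x hx)).2 hcF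
  have hτE : ∀ (x : {x // x ∈ D}), (τ x : ℕ) ∈ E := fun x => (τ x).2
  refine ⟨π, ?_, ?_, hπa, hπs⟩
  · intro x hx
    rcases hπval x hx with ⟨-, h⟩ | ⟨-, hxs, h⟩ | ⟨-, -, h2, h⟩ <;> rw [h]
    · exact hbN
    · exact Finset.mem_range.mp (Finset.mem_sdiff.mp (hσ'pool x hxs)).1
    · exact Finset.mem_range.mp (Finset.mem_sdiff.mp (hτE ⟨x, h2⟩)).1
  · intro x y hx hy hxy
    have hbpool : b ∉ pool := fun hc => (Finset.mem_sdiff.mp hc).2 hb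
    have hEnotb : ∀ (z : {x // x ∈ D}), (τ z : ℕ) ≠ b := by
      intro z hc
      have := (Finset.mem_sdiff.mp (hτE z)).2
      exact this (hc ▸ Finset.mem_insert_self b simg)
    have hEnotsimg : ∀ (z : {x // x ∈ D}), (τ z : ℕ) ∉ simg := by
      intro z hc
      exact (Finset.mem_sdiff.mp (hτE z)).2 (Finset.mem_insert.mpr (Or.inr hc))
    rcases hπval x hx with ⟨hxa, h⟩ | ⟨hxa, hxs, h⟩ | ⟨hxa, hxs, h2, h⟩ <;>
      rcases hπval y hy with ⟨hya, h'⟩ | ⟨hya, hys, h'⟩ | ⟨hya, hys, h2', h'⟩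
    · exact hxa.trans hya.symm
    · exfalso
      have : σ' y = b := by rw [← h', ← hxy, h]
      exact hbpool (this ▸ hσ'pool y hys)
    · exfalso
      exact hEnotb ⟨y, h2'⟩ (by rw [← h', ← hxy, h])
    · exfalso
      have : σ' x = b := by rw [← h, hxy, h']
      exact hbpool (this ▸ hσ'pool x hxs)
    · rw [h, h'] at hxy
      exact hσ'inj x hxs y hys hxy
    · exfalso
      have : (τ ⟨y, h2'⟩ : ℕ) = σ' x := by rw [← h', ← hxy, h]
      exact hEnotsimg ⟨y, h2'⟩ (this ▸ Finset.mem_image_of_mem σ' hxs)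
    · exfalso
      exact hEnotb ⟨x, h2⟩ (by rw [← h, hxy, h'])
    · exfalso
      have : (τ ⟨x, h2⟩ : ℕ) = σ' y := by rw [← h, hxy, h']
      exact hEnotsimg ⟨x, h2⟩ (this ▸ Finset.mem_image_of_mem σ' hys)
    · rw [h, h'] at hxy
      have := τ.injective (Subtype.ext hxy)
      exact congrArg Subtype.val this

end AuxPerm
section AuxClique

universe u₃
variable {V : Type u₃} [Fintype V]

lemma cliqueMinor_maxDegree (G : SimpleGraph V) [Nonempty V] :
    HasCliqueMinor (totalGraph G) (mdeg G + 1) := by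
  classical
  letI : DecidableRel G.Adj := Classical.decRel _
  obtain ⟨v₀, hv₀⟩ := G.exists_maximal_degree_vertex
  set nb := G.neighborFinset v₀ with hnb
  have hedge : ∀ w : {x // x ∈ nb}, s(v₀, (w : V)) ∈ G.edgeSet := by
    intro w
    have hw : (w : V) ∈ G.neighborFinset v₀ := w.2
    rw [SimpleGraph.mem_neighborFinset] at hw
    exact G.mem_edgeSet.mpr hw
  set B : Option {x // x ∈ nb} → Set (V ⊕ G.edgeSet) := fun i =>
    match i with
    | none => {Sum.inl v₀}
    | some w => {Sum.inr ⟨s(v₀, (w : V)), hedge w⟩} with hB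
  have hne : ∀ w w' : {x // x ∈ nb}, w ≠ w' →
      (⟨s(v₀, (w : V)), hedge w⟩ : G.edgeSet) ≠ ⟨s(v₀, (w' : V)), hedge w'⟩ := by
    intro w w' hww hc
    exact hww (Subtype.ext (Sym2.congr_right.mp (congrArg Subtype.val hc)))
  have hmain := hasCliqueMinor_of_index (totalGraph G) B ?_ ?_ ?_ ?_
  · have hcard : Fintype.card (Option {x // x ∈ nb}) = mdeg G + 1 := by
      rw [Fintype.card_option, Fintype.card_coe]
      have h1 : nb.card = G.degree v₀ := rfl
      rw [h1, ← hv₀, mdeg_eq G _]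
    rwa [hcard] at hmain
  · rintro (_ | w) <;> exact ⟨_, rfl⟩
  · intro i j hij
    rcases i with _ | w <;> rcases j with _ | w'
    · exact absurd rfl hij
    · show Disjoint ({Sum.inl v₀} : Set (V ⊕ G.edgeSet)) {Sum.inr ⟨s(v₀, (w' : V)), hedge w'⟩}
      rw [Set.disjoint_singleton]
      simp
    · show Disjoint ({Sum.inr ⟨s(v₀, (w : V)), hedge w⟩} : Set (V ⊕ G.edgeSet)) {Sum.inl v₀}
      rw [Set.disjoint_singleton]
      simp
    · show Disjoint ({Sum.inr ⟨s(v₀, (w : V)), hedge w⟩} : Set (V ⊕ G.edgeSet))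
        {Sum.inr ⟨s(v₀, (w' : V)), hedge w'⟩}
      rw [Set.disjoint_singleton]
      intro hc
      exact hne w w' (fun h => hij (by rw [h])) (by
        have := Sum.inr.injEq (α := V) _ _ ▸ hc
        exact Sum.inr_injective hc)
  · intro i
    rcases i with _ | w <;> exact connected_induce_singleton _ _
  · intro i j hij
    rcases i with _ | w <;> rcases j with _ | w'
    · exact absurd rfl hij
    · exact ⟨Sum.inl v₀, rfl, Sum.inr ⟨s(v₀, (w' : V)), hedge w'⟩, rfl,
        tg_adj_inl_inr (Sym2.mem_mk_left _ _)⟩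
    · exact ⟨Sum.inr ⟨s(v₀, (w : V)), hedge w⟩, rfl, Sum.inl v₀, rfl,
        (tg_adj_inl_inr (Sym2.mem_mk_left _ _)).symm⟩
    · exact ⟨Sum.inr ⟨s(v₀, (w : V)), hedge w⟩, rfl, Sum.inr ⟨s(v₀, (w' : V)), hedge w'⟩, rfl,
        tg_adj_inr_inr (hne w w' (fun h => hij (by rw [h])))
          (Sym2.mem_mk_left _ _) (Sym2.mem_mk_left _ _)⟩

end AuxClique
section MainLemma

universe u₄
variable {V : Type u₄} [Fintype V]

lemma minor_of_tcn_ge (G : SimpleGraph V)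
    (htcc : ∀ H : SimpleGraph V, H ≤ G → totalChromaticNumber H ≤ mdeg H + 2) :
    ∀ (n : ℕ) (H : SimpleGraph V), H ≤ G → H.edgeSet.ncard = n →
      mdeg G + 2 ≤ totalChromaticNumber H →
      HasCliqueMinor (totalGraph G) (mdeg G + 2) := by
  intro n
  induction n using Nat.strong_induction_on with
  | _ n IH =>
  intro H hle hn hk
  classical
  letI : DecidableRel G.Adj := Classical.decRel _
  letI : DecidableRel H.Adj := Classical.decRel _
  set D := mdeg G with hD
  -- H has an edge
  have hedge : ∃ x y, H.Adj x y := by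
    by_contra hne
    push_neg at hne
    have h1 : totalChromaticNumber H ≤ 1 := by
      apply totalChromaticNumber_le_of (fun _ => 0) (fun _ => 0)
      · exact ⟨fun u v h => absurd h (hne u v), fun u v w h _ _ => absurd h (hne u v),
          fun u v h => absurd h (hne u v)⟩
      · intro v; norm_num
      · intro e he
        exfalso
        induction e using Sym2.ind with
        | _ x y => exact hne x y (H.mem_edgeSet.mp he)
    omega
  obtain ⟨x₀, y₀, hxy₀⟩ := hedge
  haveI : Nonempty V := ⟨x₀⟩
  -- max degree of H equals D
  have hDH : mdeg H = D := by
    have h1 : mdeg H ≤ D := mdeg_mono hle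
    have h2 := htcc H hle
    omega
  obtain ⟨u, hu⟩ := H.exists_maximal_degree_vertex
  have hmdH : mdeg H = H.maxDegree := mdeg_eq H _
  have hdu : H.degree u = D := by rw [← hu, ← hmdH, hDH]
  have hD1 : 1 ≤ D := by
    have h1 : 0 < H.degree x₀ := (H.degree_pos_iff_exists_adj x₀).mpr ⟨y₀, hxy₀⟩
    have h2 := SimpleGraph.degree_le_maxDegree H x₀
    omega
  -- the graph obtained from H by removing all edges at u
  set Hu : SimpleGraph V :=
    { Adj := fun a b => H.Adj a b ∧ a ≠ u ∧ b ≠ u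
      symm := ⟨fun a b h => ⟨H.adj_symm h.1, h.2.2, h.2.1⟩⟩
      loopless := ⟨fun a h => H.loopless.irrefl a h.1⟩ } with hHu
  have hHuH : Hu ≤ H := by intro a b h; exact h.1
  have hHuG : Hu ≤ G := by intro a b h; exact hle h.1
  have hnbne : 0 < H.degree u := by omega
  obtain ⟨w₁, hw₁adj⟩ := (H.degree_pos_iff_exists_adj u).mp hnbne
  have hu_isolated : ∀ y, Hu.Reachable w₁ y → y ≠ u := by
    intro y hr hy
    subst hy
    obtain ⟨p⟩ := hr.symm
    cases p with
    | nil => exact H.loopless.irrefl _ hw₁adj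
    | cons h' _ => exact h'.2.1 rfl
  by_cases hcase : ∀ w, H.Adj u w → Hu.Reachable w₁ w
  · -- CASE A : all neighbours of u reachable in H - u : build the minor
    set C : Set (V ⊕ G.edgeSet) :=
      {z | Sum.elim (fun y => Hu.Reachable w₁ y)
        (fun (e : G.edgeSet) => (e : Sym2 V) ∈ Hu.edgeSet ∧
          ∃ y ∈ (e : Sym2 V), Hu.Reachable w₁ y) z} with hC
    have hCl : ∀ y : V, (Sum.inl y ∈ C) ↔ Hu.Reachable w₁ y := fun y => Iff.rfl
    have hCr : ∀ e : G.edgeSet, (Sum.inr e ∈ C) ↔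
        ((e : Sym2 V) ∈ Hu.edgeSet ∧ ∃ y ∈ (e : Sym2 V), Hu.Reachable w₁ y) := fun e => Iff.rfl
    set nb := H.neighborFinset u with hnb
    have hadj_of_mem : ∀ w : {x // x ∈ nb}, H.Adj u (w : V) := by
      intro w
      have hw : (w : V) ∈ H.neighborFinset u := w.2
      rwa [SimpleGraph.mem_neighborFinset] at hw
    have hedge' : ∀ w : {x // x ∈ nb}, s(u, (w : V)) ∈ G.edgeSet :=
      fun w => G.mem_edgeSet.mpr (hle (hadj_of_mem w))
    set B : Option (Option {x // x ∈ nb}) → Set (V ⊕ G.edgeSet) := fun i =>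
      match i with
      | none => {Sum.inl u}
      | some none => C
      | some (some w) => {Sum.inr ⟨s(u, (w : V)), hedge' w⟩} with hB
    have hinl_u_notin : Sum.inl u ∉ C := fun hc => hu_isolated u ((hCl u).mp hc) rfl
    have hedge_notin : ∀ w : {x // x ∈ nb},
        (Sum.inr ⟨s(u, (w : V)), hedge' w⟩ : V ⊕ G.edgeSet) ∉ C := by
      intro w hc
      have h1 := ((hCr _).mp hc).1
      have h2 : Hu.Adj u (w : V) := Hu.mem_edgeSet.mp h1
      exact h2.2.1 rfl
    have hedgene : ∀ w w' : {x // x ∈ nb}, w ≠ w' →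
        (⟨s(u, (w : V)), hedge' w⟩ : G.edgeSet) ≠ ⟨s(u, (w' : V)), hedge' w'⟩ := by
      intro w w' hww hc
      exact hww (Subtype.ext (Sym2.congr_right.mp (congrArg Subtype.val hc)))
    have hbase : Sum.inl w₁ ∈ C := (hCl w₁).mpr (SimpleGraph.Reachable.refl w₁)
    have hkey : ∀ (a b : V) (p : Hu.Walk a b), Hu.Reachable w₁ a →
        ∀ (ha : Sum.inl a ∈ C) (hb : Sum.inl b ∈ C),
        ((totalGraph G).induce C).Reachable ⟨Sum.inl a, ha⟩ ⟨Sum.inl b, hb⟩ := by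
      intro a b p
      induction p with
      | nil =>
        intro _ ha hb
        exact SimpleGraph.Reachable.refl _
      | @cons a c b hadj p' ih =>
        intro hra ha hb
        have hrc : Hu.Reachable w₁ c := hra.trans hadj.reachable
        have hcC : Sum.inl c ∈ C := (hCl c).mpr hrc
        have hstep : ((totalGraph G).induce C).Adj ⟨Sum.inl a, ha⟩ ⟨Sum.inl c, hcC⟩ := by
          show (totalGraph G).Adj (Sum.inl a) (Sum.inl c)
          exact tg_adj_inl_inl (hHuG hadj)
        exact hstep.reachable.trans (ih hrc hcC hb)
    have hCconn : ((totalGraph G).induce C).Connected := by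
      have hgen : ∀ (z : ↥C), ((totalGraph G).induce C).Reachable ⟨Sum.inl w₁, hbase⟩ z := by
        rintro ⟨z, hz⟩
        cases z with
        | inl y =>
          obtain ⟨p⟩ := (hCl y).mp hz
          exact hkey w₁ y p (SimpleGraph.Reachable.refl w₁) hbase hz
        | inr e =>
          obtain ⟨hE, y, hy, hry⟩ := (hCr e).mp hz
          have hyC : Sum.inl y ∈ C := (hCl y).mpr hry
          obtain ⟨p⟩ := hry
          have h1 := hkey w₁ y p (SimpleGraph.Reachable.refl w₁) hbase hyC
          have hstep : ((totalGraph G).induce C).Adj ⟨Sum.inl y, hyC⟩ ⟨Sum.inr e, hz⟩ := by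
            show (totalGraph G).Adj (Sum.inl y) (Sum.inr e)
            exact tg_adj_inl_inr hy
          exact h1.trans hstep.reachable
      haveI : Nonempty ↥C := ⟨⟨Sum.inl w₁, hbase⟩⟩
      constructor
      intro z z'
      exact (hgen z).symm.trans (hgen z')
    have hmain := hasCliqueMinor_of_index (totalGraph G) B ?_ ?_ ?_ ?_
    · have hcard : Fintype.card (Option (Option {x // x ∈ nb})) = D + 2 := by
        rw [Fintype.card_option, Fintype.card_option, Fintype.card_coe]
        have h1 : nb.card = H.degree u := rfl
        omega
      rwa [hcard] at hmain
    · rintro (_ | _ | w)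
      · exact ⟨_, rfl⟩
      · exact ⟨Sum.inl w₁, hbase⟩
      · exact ⟨_, rfl⟩
    · intro i j hij
      rcases i with _ | i <;> rcases j with _ | j
      · exact absurd rfl hij
      · rcases j with _ | w
        · show Disjoint ({Sum.inl u} : Set (V ⊕ G.edgeSet)) C
          exact Set.disjoint_singleton_left.mpr hinl_u_notin
        · show Disjoint ({Sum.inl u} : Set (V ⊕ G.edgeSet)) {Sum.inr ⟨s(u, (w : V)), hedge' w⟩}
          rw [Set.disjoint_singleton]
          simp
      · rcases i with _ | w
        · show Disjoint C ({Sum.inl u} : Set (V ⊕ G.edgeSet))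
          exact Set.disjoint_singleton_right.mpr hinl_u_notin
        · show Disjoint ({Sum.inr ⟨s(u, (w : V)), hedge' w⟩} : Set (V ⊕ G.edgeSet)) {Sum.inl u}
          rw [Set.disjoint_singleton]
          simp
      · rcases i with _ | w <;> rcases j with _ | w'
        · exact absurd rfl hij
        · show Disjoint C ({Sum.inr ⟨s(u, (w' : V)), hedge' w'⟩} : Set (V ⊕ G.edgeSet))
          exact Set.disjoint_singleton_right.mpr (hedge_notin w')
        · show Disjoint ({Sum.inr ⟨s(u, (w : V)), hedge' w⟩} : Set (V ⊕ G.edgeSet)) C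
          exact Set.disjoint_singleton_left.mpr (hedge_notin w)
        · show Disjoint ({Sum.inr ⟨s(u, (w : V)), hedge' w⟩} : Set (V ⊕ G.edgeSet))
            {Sum.inr ⟨s(u, (w' : V)), hedge' w'⟩}
          rw [Set.disjoint_singleton]
          intro hc
          exact hedgene w w' (fun h => hij (by rw [h])) (Sum.inr_injective hc)
    · rintro (_ | _ | w)
      · exact connected_induce_singleton _ _
      · exact hCconn
      · exact connected_induce_singleton _ _
    · intro i j hij
      rcases i with _ | i <;> rcases j with _ | j
      · exact absurd rfl hij
      · rcases j with _ | w
        · exact ⟨Sum.inl u, rfl, Sum.inl w₁, hbase, tg_adj_inl_inl (hle hw₁adj)⟩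
        · exact ⟨Sum.inl u, rfl, Sum.inr ⟨s(u, (w : V)), hedge' w⟩, rfl,
            tg_adj_inl_inr (Sym2.mem_mk_left _ _)⟩
      · rcases i with _ | w
        · exact ⟨Sum.inl w₁, hbase, Sum.inl u, rfl, (tg_adj_inl_inl (hle hw₁adj)).symm⟩
        · exact ⟨Sum.inr ⟨s(u, (w : V)), hedge' w⟩, rfl, Sum.inl u, rfl,
            (tg_adj_inl_inr (Sym2.mem_mk_left _ _)).symm⟩
      · rcases i with _ | w <;> rcases j with _ | w'
        · exact absurd rfl hij
        · exact ⟨Sum.inl (w' : V), (hCl _).mpr (hcase _ (hadj_of_mem w')),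
            Sum.inr ⟨s(u, (w' : V)), hedge' w'⟩, rfl, tg_adj_inl_inr (Sym2.mem_mk_right _ _)⟩
        · exact ⟨Sum.inr ⟨s(u, (w : V)), hedge' w⟩, rfl, Sum.inl (w : V),
            (hCl _).mpr (hcase _ (hadj_of_mem w)),
            (tg_adj_inl_inr (Sym2.mem_mk_right _ _)).symm⟩
        · exact ⟨Sum.inr ⟨s(u, (w : V)), hedge' w⟩, rfl,
            Sum.inr ⟨s(u, (w' : V)), hedge' w'⟩, rfl,
            tg_adj_inr_inr (hedgene w w' (fun h => hij (by rw [h])))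
              (Sym2.mem_mk_left _ _) (Sym2.mem_mk_left _ _)⟩
  · -- CASE B : split H at the cut vertex u and merge colorings for a contradiction
    push_neg at hcase
    obtain ⟨w₂, haw₂, hnr⟩ := hcase
    set A' : V → Prop := fun x => Hu.Reachable w₁ x ∨ x = u with hA'
    set H₁ : SimpleGraph V :=
      { Adj := fun a b => H.Adj a b ∧ (A' a ∧ A' b)
        symm := ⟨fun a b h => ⟨H.adj_symm h.1, h.2.2, h.2.1⟩⟩
        loopless := ⟨fun a h => H.loopless.irrefl a h.1⟩ } with hH₁
    set H₂ : SimpleGraph V :=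
      { Adj := fun a b => H.Adj a b ∧ ¬(A' a ∧ A' b)
        symm := ⟨fun a b h => ⟨H.adj_symm h.1, fun hc => h.2 ⟨hc.2, hc.1⟩⟩⟩
        loopless := ⟨fun a h => H.loopless.irrefl a h.1⟩ } with hH₂
    have hle1 : H₁ ≤ H := by intro a b h; exact h.1
    have hle2 : H₂ ≤ H := by intro a b h; exact h.1
    have hAu : A' u := Or.inr rfl
    have hAw₁ : A' w₁ := Or.inl (SimpleGraph.Reachable.refl w₁)
    have hnAw₂ : ¬A' w₂ := by
      rintro (h | rfl)
      · exact hnr h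
      · exact H.loopless.irrefl _ haw₂
    have htrans : ∀ a b, H.Adj a b → a ≠ u → b ≠ u →
        Hu.Reachable w₁ a → Hu.Reachable w₁ b := by
      intro a b h ha hb hr
      exact hr.trans (SimpleGraph.Adj.reachable ⟨h, ha, hb⟩)
    have hmixed : ∀ a b, H.Adj a b → A' a → ¬A' b → a = u := by
      intro a b h haa hbb
      by_contra hau
      have hbu : b ≠ u := fun hc => hbb (Or.inr hc)
      exact hbb (Or.inl (htrans a b h hau hbu (haa.resolve_right hau)))
    have hsplit : ∀ a b, H.Adj a b → H₁.Adj a b ∨ H₂.Adj a b := by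
      intro a b h
      by_cases hh : A' a ∧ A' b
      · exact Or.inl ⟨h, hh⟩
      · exact Or.inr ⟨h, hh⟩
    have hnot12 : ∀ a b, ¬(H₁.Adj a b ∧ H₂.Adj a b) := fun a b hc => hc.2.2 hc.1.2
    have hn1 : ¬H₁.Adj u w₂ := fun h => hnAw₂ h.2.2
    have hn2 : ¬H₂.Adj u w₁ := fun h => h.2 ⟨hAu, hAw₁⟩
    have hcard1 : H₁.edgeSet.ncard < n := by
      rw [← hn]
      apply Set.ncard_lt_ncard _ (Set.toFinite _)
      rw [Set.ssubset_def]
      refine ⟨SimpleGraph.edgeSet_mono hle1, fun hsup => ?_⟩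
      exact hn1 (H₁.mem_edgeSet.mp (hsup (H.mem_edgeSet.mpr haw₂)))
    have hcard2 : H₂.edgeSet.ncard < n := by
      rw [← hn]
      apply Set.ncard_lt_ncard _ (Set.toFinite _)
      rw [Set.ssubset_def]
      refine ⟨SimpleGraph.edgeSet_mono hle2, fun hsup => ?_⟩
      exact hn2 (H₂.mem_edgeSet.mp (hsup (H.mem_edgeSet.mpr hw₁adj)))
    by_cases hc1 : D + 2 ≤ totalChromaticNumber H₁
    · exact IH _ hcard1 H₁ (le_trans hle1 hle) rfl hc1
    by_cases hc2 : D + 2 ≤ totalChromaticNumber H₂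
    · exact IH _ hcard2 H₂ (le_trans hle2 hle) rfl hc2
    exfalso
    push_neg at hc1 hc2
    set N := D + 1 with hN
    obtain ⟨cv₁, ce₁, hco1, hb1v, hb1e⟩ :=
      exists_totalColoring_lt H₁ (show totalChromaticNumber H₁ ≤ N by omega)
    obtain ⟨cv₂, ce₂, hco2, hb2v, hb2e⟩ :=
      exists_totalColoring_lt H₂ (show totalChromaticNumber H₂ ≤ N by omega)
    letI : DecidableRel H₁.Adj := Classical.decRel _
    letI : DecidableRel H₂.Adj := Classical.decRel _
    set s₂ : Finset ℕ := (H₂.neighborFinset u).image (fun w => ce₂ s(u, w)) with hs₂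
    set Fb : Finset ℕ :=
      insert (cv₁ u) ((H₁.neighborFinset u).image (fun w => ce₁ s(u, w))) with hFb
    have hdsum : H₁.degree u + H₂.degree u ≤ D := by
      have hdisj : Disjoint (H₁.neighborFinset u) (H₂.neighborFinset u) := by
        rw [Finset.disjoint_left]
        intro w hw1 hw2
        rw [SimpleGraph.mem_neighborFinset] at hw1 hw2
        exact hnot12 u w ⟨hw1, hw2⟩
      have hsub : H₁.neighborFinset u ∪ H₂.neighborFinset u ⊆ H.neighborFinset u := by
        intro w hw
        rw [Finset.mem_union, SimpleGraph.mem_neighborFinset,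
          SimpleGraph.mem_neighborFinset] at hw
        rw [SimpleGraph.mem_neighborFinset]
        rcases hw with h | h
        · exact hle1 h
        · exact hle2 h
      have hcc := Finset.card_le_card hsub
      rw [Finset.card_union_of_disjoint hdisj] at hcc
      have e1 : H₁.degree u = (H₁.neighborFinset u).card := rfl
      have e2 : H₂.degree u = (H₂.neighborFinset u).card := rfl
      have e3 : H.degree u = (H.neighborFinset u).card := rfl
      omega
    have hcards : s₂.card + Fb.card ≤ N := by
      have h1 : s₂.card ≤ H₂.degree u := Finset.card_image_le
      have h2 : Fb.card ≤ H₁.degree u + 1 := by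
        refine le_trans (Finset.card_insert_le _ _) ?_
        have h3 := Finset.card_image_le
          (s := H₁.neighborFinset u) (f := fun w => ce₁ s(u, w))
        have e1 : H₁.degree u = (H₁.neighborFinset u).card := rfl
        omega
      omega
    have hsN : ∀ x ∈ s₂, x < N := by
      intro x hx
      obtain ⟨w, hw, rfl⟩ := Finset.mem_image.mp hx
      rw [SimpleGraph.mem_neighborFinset] at hw
      exact hb2e _ (H₂.mem_edgeSet.mpr hw)
    have hFN : ∀ x ∈ Fb, x < N := by
      intro x hx
      rcases Finset.mem_insert.mp hx with rfl | hx
      · exact hb1v u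
      · obtain ⟨w, hw, rfl⟩ := Finset.mem_image.mp hx
        rw [SimpleGraph.mem_neighborFinset] at hw
        exact hb1e _ (H₁.mem_edgeSet.mpr hw)
    have hanotins : cv₂ u ∉ s₂ := by
      intro hc
      obtain ⟨w, hw, heq⟩ := Finset.mem_image.mp hc
      rw [SimpleGraph.mem_neighborFinset] at hw
      exact (hco2.2.2 hw).1 heq
    obtain ⟨π, hπN, hπinj, hπab, hπs⟩ := exists_good_injection N (cv₂ u) (cv₁ u) s₂ Fb
      (hb2v u) (Finset.mem_insert_self _ _) hsN hFN hanotins hcards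
    have hmemFb : ∀ w, H₁.Adj u w → ce₁ s(u, w) ∈ Fb := by
      intro w h
      exact Finset.mem_insert.mpr (Or.inr (Finset.mem_image.mpr
        ⟨w, by rw [SimpleGraph.mem_neighborFinset]; exact h, rfl⟩))
    have hπs' : ∀ w, H₂.Adj u w → π (ce₂ s(u, w)) ∉ Fb := by
      intro w h
      exact hπs _ (Finset.mem_image.mpr ⟨w, by rw [SimpleGraph.mem_neighborFinset]; exact h, rfl⟩)
    set cv : V → ℕ := fun x => if A' x then cv₁ x else π (cv₂ x) with hcv
    set ce : Sym2 V → ℕ := fun e => if e ∈ H₁.edgeSet then ce₁ e else π (ce₂ e) with hce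
    have hcvA : ∀ a, A' a → cv a = cv₁ a := by
      intro a ha; rw [hcv]; dsimp only; rw [if_pos ha]
    have hcvnA : ∀ a, ¬A' a → cv a = π (cv₂ a) := by
      intro a ha; rw [hcv]; dsimp only; rw [if_neg ha]
    have hedgecase : ∀ a b, H.Adj a b →
        (H₁.Adj a b ∧ ce s(a, b) = ce₁ s(a, b)) ∨
        (H₂.Adj a b ∧ ce s(a, b) = π (ce₂ s(a, b))) := by
      intro a b h
      rcases hsplit a b h with h1 | h2
      · exact Or.inl ⟨h1, by rw [hce]; dsimp only; rw [if_pos (H₁.mem_edgeSet.mpr h1)]⟩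
      · refine Or.inr ⟨h2, ?_⟩
        rw [hce]; dsimp only
        rw [if_neg (fun hc => hnot12 a b ⟨H₁.mem_edgeSet.mp hc, h2⟩)]
    have hH₂u : ∀ a b, H₂.Adj a b → A' a → a = u := by
      intro a b h2 haa
      have hbb : ¬A' b := fun hc => h2.2 ⟨haa, hc⟩
      exact hmixed a b h2.1 haa hbb
    have hπne : ∀ x y, x < N → y < N → x ≠ y → π x ≠ π y := by
      intro x y hx hy hxy hc
      exact hxy (hπinj x y hx hy hc)
    have hceu : ∀ a b, H.Adj a b → ce s(a, b) ≠ cv a := by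
      intro a b hab
      rcases hedgecase a b hab with ⟨h1, heq⟩ | ⟨h2, heq⟩
      · rw [heq, hcvA a h1.2.1]
        exact (hco1.2.2 h1).1
      · rw [heq]
        by_cases haa : A' a
        · have hau : a = u := hH₂u a b h2 haa
          subst hau
          rw [hcvA a hAu]
          exact fun hc => hπs' b h2 (hc ▸ Finset.mem_insert_self _ _)
        · rw [hcvnA a haa]
          exact hπne _ _ (hb2e _ (H₂.mem_edgeSet.mpr h2)) (hb2v a) (hco2.2.2 h2).1
    have hcol : IsTotalColoring H cv ce := by
      refine ⟨?_, ?_, ?_⟩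
      · intro a b hab
        by_cases haa : A' a <;> by_cases hbb : A' b
        · rw [hcvA a haa, hcvA b hbb]
          exact hco1.1 ⟨hab, haa, hbb⟩
        · have h2 : H₂.Adj a b := ⟨hab, fun hc => hbb hc.2⟩
          have hau : a = u := hH₂u a b h2 haa
          rw [hcvA a haa, hcvnA b hbb]
          subst hau
          rw [← hπab]
          exact hπne _ _ (hb2v a) (hb2v b) (hco2.1 h2)
        · have h2 : H₂.Adj a b := ⟨hab, fun hc => haa hc.1⟩
          have hbu : b = u := hH₂u b a h2.symm hbb
          rw [hcvnA a haa, hcvA b hbb]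
          subst hbu
          rw [← hπab]
          exact hπne _ _ (hb2v a) (hb2v b) (hco2.1 h2)
        · have h2 : H₂.Adj a b := ⟨hab, fun hc => haa hc.1⟩
          rw [hcvnA a haa, hcvnA b hbb]
          exact hπne _ _ (hb2v a) (hb2v b) (hco2.1 h2)
      · intro a b c hab hac hbc
        rcases hedgecase a b hab with ⟨h1b, heqb⟩ | ⟨h2b, heqb⟩ <;>
          rcases hedgecase a c hac with ⟨h1c, heqc⟩ | ⟨h2c, heqc⟩
        · rw [heqb, heqc]
          exact hco1.2.1 h1b h1c hbc
        · rw [heqb, heqc]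
          have hau : a = u := hH₂u a c h2c h1b.2.1
          subst hau
          exact fun hc => hπs' c h2c (hc ▸ hmemFb b h1b)
        · rw [heqb, heqc]
          have hau : a = u := hH₂u a b h2b h1c.2.1
          subst hau
          exact fun hc => hπs' b h2b (hc.symm ▸ hmemFb c h1c)
        · rw [heqb, heqc]
          exact hπne _ _ (hb2e _ (H₂.mem_edgeSet.mpr h2b)) (hb2e _ (H₂.mem_edgeSet.mpr h2c))
            (hco2.2.1 h2b h2c hbc)
      · intro a b hab
        refine ⟨hceu a b hab, ?_⟩
        rw [Sym2.eq_swap]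
        exact hceu b a (H.adj_symm hab)
    have hfin : totalChromaticNumber H ≤ N := by
      apply totalChromaticNumber_le_of cv ce hcol
      · intro v
        by_cases hv : A' v
        · rw [hcvA v hv]; exact hb1v v
        · rw [hcvnA v hv]; exact hπN _ (hb2v v)
      · intro e
        induction e using Sym2.ind with
        | _ a b =>
          intro he
          have hab : H.Adj a b := H.mem_edgeSet.mp he
          rcases hedgecase a b hab with ⟨h1, heq⟩ | ⟨h2, heq⟩
          · rw [heq]; exact hb1e _ (H₁.mem_edgeSet.mpr h1)
          · rw [heq]; exact hπN _ (hb2e _ (H₂.mem_edgeSet.mpr h2))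
    omega

end MainLemma

/-- if `F` is a class of simple finite graphs closed under taking subgraphs on
which the Total Coloring Conjecture holds (`χ''(G) ≤ Δ(G) + 2`), then Hadwiger's conjecture
holds for the total graph of every member of `F`, i.e. `χ(T(G)) ≤ η(T(G))`. -/
theorem hadwiger_totalGraph_of_TCC (F : ∀ {V : Type u}, SimpleGraph V → Prop)
    (hclosed : ∀ {V : Type u} [Fintype V] (G : SimpleGraph V),
      F G → ∀ G' : G.Subgraph, F G'.coe)
    (hTCC : ∀ {V : Type u} [Fintype V] (G : SimpleGraph V) [DecidableRel G.Adj],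
      F G → totalChromaticNumber G ≤ G.maxDegree + 2)
    {V : Type u} [Fintype V] (G : SimpleGraph V) (hG : F G) :
    (totalGraph G).chromaticNumber ≤ (hadwigerNumber (totalGraph G) : ℕ∞) := by
  classical
  letI : DecidableRel G.Adj := Classical.decRel _
  haveI : Fintype ↥G.edgeSet := Set.Finite.fintype (Set.toFinite _)
  have htcc : ∀ H : SimpleGraph V, H ≤ G → totalChromaticNumber H ≤ mdeg H + 2 :=
    tcc_of_closed F hclosed hTCC G hG
  set k := totalChromaticNumber G with hkdef
  have hkD : k ≤ mdeg G + 2 := htcc G le_rfl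
  have hminor : HasCliqueMinor (totalGraph G) k := by
    rcases Nat.lt_or_ge k (mdeg G + 2) with h | h
    · rcases Nat.eq_zero_or_pos k with h0 | hpos
      · rw [h0]; exact hasCliqueMinor_zero _
      · have hne : Nonempty V := by
          by_contra hc
          rw [not_nonempty_iff] at hc
          have h0 : totalChromaticNumber G ≤ 0 := by
            apply totalChromaticNumber_le_of (fun _ => 0) (fun _ => 0)
            · exact ⟨fun u _ _ => (hc.false u).elim, fun u _ _ _ _ _ => (hc.false u).elim,
                fun u _ _ => (hc.false u).elim⟩
            · intro v; exact (hc.false v).elim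
            · intro e _
              induction e using Sym2.ind with
              | _ x y => exact (hc.false x).elim
          omega
        haveI := hne
        exact (cliqueMinor_maxDegree G).mono (by omega)
    · have hm := minor_of_tcn_ge G htcc G.edgeSet.ncard G le_rfl rfl h
      exact hm.mono hkD
  have hcol : (totalGraph G).chromaticNumber ≤ (k : ℕ∞) := by
    obtain ⟨cv, ce, hc, h1, h2⟩ := exists_totalColoring_lt G le_rfl
    exact (totalGraph_colorable cv ce hc h1 h2).chromaticNumber_le
  have hηk : (k : ℕ∞) ≤ (hadwigerNumber (totalGraph G) : ℕ∞) := by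
    exact_mod_cast le_hadwigerNumber (totalGraph G) k hminor
  exact le_trans hcol hηk
end

section
/- Let H be a connected simple finite graph that is t-total-critical for some t ≥ Δ(H) + 2, i.e., χ''(H) = t and χ''(H − e) ≤ t − 1 for every edge e. Then H has no cut-vertices (no vertex of H whose deletion disconnects H). -/
open SimpleGraph

/-! ### Auxiliary lemmas -/

private lemma aux_finset_inj {s t : Finset ℕ} (h : s.card ≤ t.card) :
    ∃ f : ℕ → ℕ, Set.InjOn f ↑s ∧ ∀ x ∈ s, f x ∈ t := by
  obtain ⟨f, hmaps, hinj⟩ := (s : Set ℕ).toFinite.exists_injOn_of_encard_le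
    (t := (t : Set ℕ)) (by
    rw [Set.encard_coe_eq_coe_finsetCard, Set.encard_coe_eq_coe_finsetCard]
    exact_mod_cast h)
  exact ⟨f, hinj, fun x hx => hmaps hx⟩

private lemma aux_exists_total_coloring {V : Type*} [Fintype V] (G : SimpleGraph V) :
    Set.Nonempty {k | ∃ cv ce, IsTotalColoring G cv ce ∧ (∀ v, cv v < k) ∧
      ∀ e ∈ G.edgeSet, ce e < k} := by
  classical
  obtain ⟨n, ⟨ev⟩⟩ := Finite.exists_equiv_fin V
  obtain ⟨m, ⟨ee⟩⟩ := Finite.exists_equiv_fin (Sym2 V)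
  refine ⟨n + m, fun u => (ev u : ℕ), fun e => n + (ee e : ℕ), ⟨?_, ?_, ?_⟩, ?_, ?_⟩
  · intro u v hadj h
    exact hadj.ne (ev.injective (Fin.val_injective h))
  · intro u v w _ _ hvw h
    have := ee.injective (Fin.val_injective (Nat.add_left_cancel h))
    exact hvw (Sym2.congr_right.mp this)
  · intro u v _
    refine ⟨?_, ?_⟩
    · dsimp only; have := (ev u).isLt; omega
    · dsimp only; have := (ev v).isLt; omega
  · intro u; dsimp only; have := (ev u).isLt; omega
  · intro e _; dsimp only; have := (ee e).isLt; omega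

private lemma aux_exists_coloring_of_le {V : Type*} [Fintype V] (G : SimpleGraph V) {m : ℕ}
    (h : totalChromaticNumber G ≤ m) :
    ∃ cv ce, IsTotalColoring G cv ce ∧ (∀ v, cv v < m) ∧ ∀ e ∈ G.edgeSet, ce e < m := by
  obtain ⟨cv, ce, hc, h1, h2⟩ := Nat.sInf_mem (aux_exists_total_coloring G)
  exact ⟨cv, ce, hc, fun v => lt_of_lt_of_le (h1 v) h, fun e he => lt_of_lt_of_le (h2 e he) h⟩
/-- a connected `t`-total-critical graph with `t ≥ Δ(H) + 2` has no
cut-vertices: deleting any vertex leaves a connected graph. -/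
theorem no_cutVertex_of_totalCritical {V : Type*} [Fintype V] (H : SimpleGraph V)
    [DecidableRel H.Adj] (t : ℕ) (ht : H.maxDegree + 2 ≤ t) (hconn : H.Connected)
    (hchi : totalChromaticNumber H = t)
    (hcrit : ∀ e ∈ H.edgeSet, totalChromaticNumber (H.deleteEdges {e}) ≤ t - 1) :
    ∀ v : V, (H.induce ({v}ᶜ : Set V)).Connected := by
  classical
  intro v
  by_contra hnc
  by_cases hsing : ∀ u : V, u = v
  · -- only one vertex: H has no edges, so χ'' H ≤ 1 < t, contradiction
    have hle : totalChromaticNumber H ≤ 1 := by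
      apply Nat.sInf_le
      refine ⟨fun _ => 0, fun _ => 0, ⟨?_, ?_, ?_⟩, fun _ => one_pos, fun _ _ => one_pos⟩
      · intro p q h
        exact absurd ((hsing p).trans (hsing q).symm) h.ne
      · intro p q r h _ _
        exact absurd ((hsing p).trans (hsing q).symm) h.ne
      · intro p q h
        exact absurd ((hsing p).trans (hsing q).symm) h.ne
    omega
  push_neg at hsing
  obtain ⟨u₀, hu₀⟩ := hsing
  have hnper : Nonempty ({v}ᶜ : Set V) := ⟨⟨u₀, hu₀⟩⟩
  rw [SimpleGraph.connected_iff] at hnc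
  have hnp : ¬ (H.induce ({v}ᶜ : Set V)).Preconnected := fun h => hnc ⟨h, hnper⟩
  unfold SimpleGraph.Preconnected at hnp
  push_neg at hnp
  obtain ⟨x, y, hxy⟩ := hnp
  -- the component of x in H - v
  set A : Set V := {u | ∃ h : u ∈ ({v}ᶜ : Set V),
      (H.induce ({v}ᶜ : Set V)).Reachable x ⟨u, h⟩} with hA
  have hxA : (x : V) ∈ A := ⟨x.2, by exact SimpleGraph.Reachable.refl _⟩
  have hyA : (y : V) ∉ A := by
    rintro ⟨h, hr⟩
    exact hxy hr
  have hvA : v ∉ A := by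
    rintro ⟨h, -⟩
    exact h rfl
  have hxv : (x : V) ≠ v := x.2
  have hyv : (y : V) ≠ v := y.2
  have hclose : ∀ ⦃p q : V⦄, p ∈ A → H.Adj p q → q ≠ v → q ∈ A := by
    rintro p q ⟨hp, hr⟩ hadj hq
    have hq' : q ∈ ({v}ᶜ : Set V) := hq
    refine ⟨hq', hr.trans (SimpleGraph.Adj.reachable ?_)⟩
    exact hadj
  have hside : ∀ ⦃p q : V⦄, H.Adj p q → p ∉ A → p ≠ v → q ∉ A :=
    fun p q h hp hpv hq => hp (hclose hq h.symm hpv)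
  -- pick an edge at x and an edge at y
  have hxedge : ∃ w, H.Adj (x : V) w := by
    obtain ⟨p⟩ := hconn.preconnected (x : V) v
    obtain ⟨w, h, -, -⟩ := SimpleGraph.Walk.not_nil_iff.mp (SimpleGraph.Walk.not_nil_of_ne (p := p) hxv)
    exact ⟨w, h⟩
  have hyedge : ∃ w, H.Adj (y : V) w := by
    obtain ⟨p⟩ := hconn.preconnected (y : V) v
    obtain ⟨w, h, -, -⟩ := SimpleGraph.Walk.not_nil_iff.mp (SimpleGraph.Walk.not_nil_of_ne (p := p) hyv)
    exact ⟨w, h⟩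
  obtain ⟨x₁, hax⟩ := hxedge
  obtain ⟨y₁, hay⟩ := hyedge
  set e₁ : Sym2 V := s((x : V), x₁) with he₁def
  set e₂ : Sym2 V := s((y : V), y₁) with he₂def
  have he₁ : e₁ ∈ H.edgeSet := hax
  have he₂ : e₂ ∈ H.edgeSet := hay
  obtain ⟨cv₁, ce₁, hc₁, hbv₁, hbe₁⟩ := aux_exists_coloring_of_le _ (hcrit e₂ he₂)
  obtain ⟨cv₂, ce₂, hc₂, hbv₂, hbe₂⟩ := aux_exists_coloring_of_le _ (hcrit e₁ he₁)
  set k : ℕ := t - 1 with hkdef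
  have hk : H.maxDegree + 1 ≤ k := by omega
  -- edges on the A-side survive deleting e₂, edges on the other side survive deleting e₁
  have hH₁ : ∀ ⦃p q : V⦄, H.Adj p q → (p ∈ A ∨ p = v) → (q ∈ A ∨ q = v) →
      (H.deleteEdges {e₂}).Adj p q := by
    intro p q h hp hq
    rw [SimpleGraph.deleteEdges_adj]
    refine ⟨h, ?_⟩
    simp only [Set.mem_singleton_iff]
    intro hEq
    have hy : (y : V) ∈ s(p, q) := hEq ▸ Sym2.mem_mk_left _ _
    rcases Sym2.mem_iff.mp hy with h' | h'
    · cases h'; rcases hp with h'' | h'' <;> [exact hyA h''; exact hyv h'']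
    · cases h'; rcases hq with h'' | h'' <;> [exact hyA h''; exact hyv h'']
  have hH₂ : ∀ ⦃p q : V⦄, H.Adj p q → p ∉ A → q ∉ A →
      (H.deleteEdges {e₁}).Adj p q := by
    intro p q h hp hq
    rw [SimpleGraph.deleteEdges_adj]
    refine ⟨h, ?_⟩
    simp only [Set.mem_singleton_iff]
    intro hEq
    have hx' : (x : V) ∈ s(p, q) := hEq ▸ Sym2.mem_mk_left _ _
    rcases Sym2.mem_iff.mp hx' with h' | h'
    · cases h'; exact hp hxA
    · cases h'; exact hq hxA
  -- characterizing the if-condition on edges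
  have hQ : ∀ p q : V, (∀ z ∈ s(p, q), z ∈ A ∨ z = v) ↔
      ((p ∈ A ∨ p = v) ∧ (q ∈ A ∨ q = v)) := by
    intro p q
    constructor
    · intro h; exact ⟨h p (Sym2.mem_mk_left _ _), h q (Sym2.mem_mk_right _ _)⟩
    · rintro ⟨h1, h2⟩ z hz
      rcases Sym2.mem_iff.mp hz with rfl | rfl <;> assumption
  have hAllout : ∀ ⦃p q : V⦄, H.Adj p q → ¬ (∀ z ∈ s(p, q), z ∈ A ∨ z = v) →
      p ∉ A ∧ q ∉ A := by
    intro p q h hN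
    rw [hQ] at hN
    by_cases hp : p ∈ A ∨ p = v
    · have hq : q ∉ A ∧ q ≠ v := by tauto
      have := hside h.symm hq.1 hq.2
      exact ⟨this, hq.1⟩
    · push_neg at hp
      exact ⟨hp.1, hside h hp.1 hp.2⟩
  -- neighbor sets of v on each side
  set N₁ : Finset V := (H.neighborFinset v).filter (· ∈ A) with hN₁
  set N₂ : Finset V := (H.neighborFinset v).filter (· ∉ A) with hN₂
  have hNcard : N₁.card + N₂.card = H.degree v := by
    rw [hN₁, hN₂, Finset.card_filter_add_card_filter_not, SimpleGraph.degree]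
  have hdeg : H.degree v ≤ H.maxDegree := H.degree_le_maxDegree v
  set E₁ : Finset ℕ := N₁.image (fun z => ce₁ s(v, z)) with hE₁
  set F : Finset ℕ := N₂.image (fun z => ce₂ s(v, z)) with hF
  have hN₁mem : ∀ z ∈ N₁, H.Adj v z ∧ z ∈ A := by
    intro z hz
    rw [hN₁, Finset.mem_filter, SimpleGraph.mem_neighborFinset] at hz
    exact hz
  have hN₂mem : ∀ z ∈ N₂, H.Adj v z ∧ z ∉ A := by
    intro z hz
    rw [hN₂, Finset.mem_filter, SimpleGraph.mem_neighborFinset] at hz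
    exact hz
  have hE₁lt : ∀ c ∈ E₁, c < k := by
    intro c hc
    obtain ⟨z, hz, rfl⟩ := Finset.mem_image.mp hc
    obtain ⟨hadj, hzA⟩ := hN₁mem z hz
    exact hbe₁ _ (hH₁ hadj (Or.inr rfl) (Or.inl hzA))
  have hc₀E₁ : cv₁ v ∉ E₁ := by
    intro hc
    obtain ⟨z, hz, hEq⟩ := Finset.mem_image.mp hc
    obtain ⟨hadj, hzA⟩ := hN₁mem z hz
    exact (hc₁.2.2 (hH₁ hadj (Or.inr rfl) (Or.inl hzA))).1 hEq
  have hFlt : ∀ c ∈ F, c < k := by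
    intro c hc
    obtain ⟨z, hz, rfl⟩ := Finset.mem_image.mp hc
    obtain ⟨hadj, hzA⟩ := hN₂mem z hz
    exact hbe₂ _ (hH₂ hadj hvA hzA)
  have hd₀F : cv₂ v ∉ F := by
    intro hc
    obtain ⟨z, hz, hEq⟩ := Finset.mem_image.mp hc
    obtain ⟨hadj, hzA⟩ := hN₂mem z hz
    exact (hc₂.2.2 (hH₂ hadj hvA hzA)).1 hEq
  set G₀ : Finset ℕ := Finset.range k \ insert (cv₁ v) E₁ with hG₀
  have hinsSub : insert (cv₁ v) E₁ ⊆ Finset.range k := by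
    intro c hc
    rcases Finset.mem_insert.mp hc with rfl | hc
    · exact Finset.mem_range.mpr (hbv₁ v)
    · exact Finset.mem_range.mpr (hE₁lt c hc)
  have hG₀card : G₀.card = k - (E₁.card + 1) := by
    rw [hG₀, Finset.card_sdiff_of_subset hinsSub, Finset.card_insert_of_notMem hc₀E₁,
      Finset.card_range]
  have hFG₀ : F.card ≤ G₀.card := by
    have h1 : F.card ≤ N₂.card := Finset.card_image_le
    have h2 : E₁.card ≤ N₁.card := Finset.card_image_le
    omega
  obtain ⟨f, hfinj, hfmem⟩ := aux_finset_inj hFG₀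
  set S : Finset ℕ := insert (cv₂ v) F with hS
  set T : Finset ℕ := insert (cv₁ v) (F.image f) with hT
  have hc₀G₀ : cv₁ v ∉ G₀ := by
    rw [hG₀, Finset.mem_sdiff]
    rintro ⟨-, h⟩
    exact h (Finset.mem_insert_self _ _)
  have hc₀img : cv₁ v ∉ F.image f := by
    intro h
    obtain ⟨c, hc, hEq⟩ := Finset.mem_image.mp h
    exact hc₀G₀ (hEq ▸ hfmem c hc)
  have hScard : S.card = F.card + 1 := Finset.card_insert_of_notMem hd₀F
  have hTcard : T.card = F.card + 1 := by
    rw [hT, Finset.card_insert_of_notMem hc₀img, Finset.card_image_of_injOn hfinj]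
  have hSsub : S ⊆ Finset.range k := by
    intro c hc
    rcases Finset.mem_insert.mp hc with rfl | hc
    · exact Finset.mem_range.mpr (hbv₂ v)
    · exact Finset.mem_range.mpr (hFlt c hc)
  have hTsub : T ⊆ Finset.range k := by
    intro c hc
    rcases Finset.mem_insert.mp hc with rfl | hc
    · exact Finset.mem_range.mpr (hbv₁ v)
    · obtain ⟨d, hd, hEq⟩ := Finset.mem_image.mp hc
      have := hfmem d hd
      rw [hG₀, Finset.mem_sdiff] at this
      exact hEq ▸ this.1
  --  map S into T
  set π₀ : ℕ → ℕ := fun z => if z = cv₂ v then cv₁ v else f z with hπ₀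
  have hπ₀mem : ∀ z ∈ S, π₀ z ∈ T := by
    intro z hz
    rw [hπ₀]
    rcases Finset.mem_insert.mp hz with rfl | hz
    · simp [hT]
    · have hzne : z ≠ cv₂ v := fun h => hd₀F (h ▸ hz)
      simp only [if_neg hzne]
      exact Finset.mem_insert_of_mem (Finset.mem_image_of_mem f hz)
  have hπ₀inj : ∀ z ∈ S, ∀ w ∈ S, π₀ z = π₀ w → z = w := by
    intro z hz w hw h
    rw [hπ₀] at h
    dsimp only at h
    rcases Finset.mem_insert.mp hz with rfl | hz <;>
      rcases Finset.mem_insert.mp hw with rfl | hw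
    · rfl
    · rw [if_pos rfl, if_neg (fun hEq : w = cv₂ v => hd₀F (hEq ▸ hw))] at h
      exact absurd (h ▸ hfmem w hw) hc₀G₀
    · rw [if_pos rfl, if_neg (fun hEq : z = cv₂ v => hd₀F (hEq ▸ hz))] at h
      exact absurd (h ▸ hfmem z hz) hc₀G₀
    · rw [if_neg (fun hEq : z = cv₂ v => hd₀F (hEq ▸ hz)),
        if_neg (fun hEq : w = cv₂ v => hd₀F (hEq ▸ hw))] at h
      exact hfinj hz hw h
  -- extend to the complement
  have hcompl : (Finset.range k \ S).card ≤ (Finset.range k \ T).card := by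
    rw [Finset.card_sdiff_of_subset hSsub, Finset.card_sdiff_of_subset hTsub, hScard, hTcard]
  obtain ⟨g, hginj, hgmem⟩ := aux_finset_inj hcompl
  set π : ℕ → ℕ := fun z => if z ∈ S then π₀ z else g z with hπ
  have hπlt : ∀ z, z < k → π z < k := by
    intro z hz
    rw [hπ]
    dsimp only
    by_cases h : z ∈ S
    · rw [if_pos h]
      exact Finset.mem_range.mp (hTsub (hπ₀mem z h))
    · rw [if_neg h]
      have := hgmem z (Finset.mem_sdiff.mpr ⟨Finset.mem_range.mpr hz, h⟩)
      rw [Finset.mem_sdiff] at this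
      exact Finset.mem_range.mp this.1
  have hπinj : ∀ z w, z < k → w < k → π z = π w → z = w := by
    intro z w hz hw h
    rw [hπ] at h
    dsimp only at h
    by_cases h1 : z ∈ S <;> by_cases h2 : w ∈ S
    · rw [if_pos h1, if_pos h2] at h
      exact hπ₀inj z h1 w h2 h
    · rw [if_pos h1, if_neg h2] at h
      have hin := hπ₀mem z h1
      have hout := hgmem w (Finset.mem_sdiff.mpr ⟨Finset.mem_range.mpr hw, h2⟩)
      rw [Finset.mem_sdiff] at hout
      exact absurd (h ▸ hin) hout.2
    · rw [if_neg h1, if_pos h2] at h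
      have hin := hπ₀mem w h2
      have hout := hgmem z (Finset.mem_sdiff.mpr ⟨Finset.mem_range.mpr hz, h1⟩)
      rw [Finset.mem_sdiff] at hout
      exact absurd (h ▸ hout.2) (not_not_intro hin)
    · rw [if_neg h1, if_neg h2] at h
      exact hginj (by exact Finset.mem_sdiff.mpr ⟨Finset.mem_range.mpr hz, h1⟩)
        (by exact Finset.mem_sdiff.mpr ⟨Finset.mem_range.mpr hw, h2⟩) h
  have hπd₀ : π (cv₂ v) = cv₁ v := by
    rw [hπ]
    dsimp only
    rw [if_pos (Finset.mem_insert_self _ _)]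
    simp [hπ₀]
  have hπF : ∀ c ∈ F, π c ∈ G₀ := by
    intro c hc
    have hcne : c ≠ cv₂ v := fun h => hd₀F (h ▸ hc)
    rw [hπ]
    dsimp only
    rw [if_pos (Finset.mem_insert_of_mem hc)]
    simp only [hπ₀]
    rw [if_neg hcne]
    exact hfmem c hc
  -- the combined coloring of H with k = t - 1 colors
  set cv : V → ℕ := fun u => if u ∈ A ∨ u = v then cv₁ u else π (cv₂ u) with hcv
  set ce : Sym2 V → ℕ := fun e => if ∀ z ∈ e, z ∈ A ∨ z = v then ce₁ e else π (ce₂ e)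
    with hce
  have hcvS₁ : ∀ u, (u ∈ A ∨ u = v) → cv u = cv₁ u := by
    intro u hu; rw [hcv]; exact if_pos hu
  have hcvS₂ : ∀ u, ¬(u ∈ A ∨ u = v) → cv u = π (cv₂ u) := by
    intro u hu; rw [hcv]; exact if_neg hu
  have hceS₁ : ∀ p q : V, (p ∈ A ∨ p = v) → (q ∈ A ∨ q = v) → ce s(p, q) = ce₁ s(p, q) := by
    intro p q hp hq; rw [hce]; exact if_pos ((hQ p q).mpr ⟨hp, hq⟩)
  have hceS₂ : ∀ p q : V, ¬((p ∈ A ∨ p = v) ∧ (q ∈ A ∨ q = v)) →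
      ce s(p, q) = π (ce₂ s(p, q)) := by
    intro p q h; rw [hce]; exact if_neg (fun hc => h ((hQ p q).mp hc))
  have hbound : totalChromaticNumber H ≤ k := by
    apply Nat.sInf_le
    refine ⟨cv, ce, ⟨?_, ?_, ?_⟩, ?_, ?_⟩
    · -- adjacent vertices
      intro p q hadj
      by_cases hp : p ∈ A ∨ p = v <;> by_cases hq : q ∈ A ∨ q = v
      · rw [hcvS₁ p hp, hcvS₁ q hq]
        exact hc₁.1 (hH₁ hadj hp hq)
      · -- q outside; then p = v
        push_neg at hq
        have hpv : p = v := by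
          rcases hp with hp' | hp'
          · exact absurd (hclose hp' hadj hq.2) hq.1
          · exact hp'
        subst hpv
        rw [hcvS₁ p hp, hcvS₂ q (by push_neg; exact hq), ← hπd₀]
        intro h
        exact hc₂.1 (hH₂ hadj hvA hq.1) (hπinj _ _ (hbv₂ p) (hbv₂ q) h)
      · push_neg at hp
        have hqv : q = v := by
          rcases hq with hq' | hq'
          · exact absurd (hclose hq' hadj.symm hp.2) hp.1
          · exact hq'
        subst hqv
        rw [hcvS₁ q hq, hcvS₂ p (by push_neg; exact hp), ← hπd₀]
        intro h
        exact hc₂.1 (hH₂ hadj hp.1 hvA) (hπinj _ _ (hbv₂ p) (hbv₂ q) h)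
      · push_neg at hp; push_neg at hq
        rw [hcvS₂ p (by push_neg; exact hp), hcvS₂ q (by push_neg; exact hq)]
        intro h
        exact hc₂.1 (hH₂ hadj hp.1 hq.1) (hπinj _ _ (hbv₂ p) (hbv₂ q) h)
    · -- adjacent edges
      intro u p q hup huq hpq
      by_cases h1 : (u ∈ A ∨ u = v) ∧ (p ∈ A ∨ p = v) <;>
        by_cases h2 : (u ∈ A ∨ u = v) ∧ (q ∈ A ∨ q = v)
      · rw [hceS₁ u p h1.1 h1.2, hceS₁ u q h2.1 h2.2]
        exact hc₁.2.1 (hH₁ hup h1.1 h1.2) (hH₁ huq h2.1 h2.2) hpq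
      · -- first edge inside, second outside: u = v
        have hq' := hAllout huq (fun hc => h2 ((hQ u q).mp hc))
        have huv : u = v := by
          rcases h1.1 with hu' | hu'
          · exact absurd hu' hq'.1
          · exact hu'
        subst huv
        rw [hceS₁ u p h1.1 h1.2, hceS₂ u q h2]
        have hpA : p ∈ A := by
          rcases h1.2 with hp' | hp'
          · exact hp'
          · exact absurd hp' hup.ne'
        have hpN : p ∈ N₁ := by
          rw [hN₁, Finset.mem_filter, SimpleGraph.mem_neighborFinset]
          exact ⟨hup, hpA⟩
        have hqN : q ∈ N₂ := by
          rw [hN₂, Finset.mem_filter, SimpleGraph.mem_neighborFinset]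
          exact ⟨huq, hq'.2⟩
        have hmem : π (ce₂ s(u, q)) ∈ G₀ :=
          hπF _ (Finset.mem_image_of_mem _ hqN)
        rw [hG₀, Finset.mem_sdiff] at hmem
        intro h
        exact hmem.2 (Finset.mem_insert_of_mem
          (h ▸ Finset.mem_image_of_mem _ hpN))
      · have hp' := hAllout hup (fun hc => h1 ((hQ u p).mp hc))
        have huv : u = v := by
          rcases h2.1 with hu' | hu'
          · exact absurd hu' hp'.1
          · exact hu'
        subst huv
        rw [hceS₁ u q h2.1 h2.2, hceS₂ u p h1]
        have hqA : q ∈ A := by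
          rcases h2.2 with hq' | hq'
          · exact hq'
          · exact absurd hq' huq.ne'
        have hqN : q ∈ N₁ := by
          rw [hN₁, Finset.mem_filter, SimpleGraph.mem_neighborFinset]
          exact ⟨huq, hqA⟩
        have hpN : p ∈ N₂ := by
          rw [hN₂, Finset.mem_filter, SimpleGraph.mem_neighborFinset]
          exact ⟨hup, hp'.2⟩
        have hmem : π (ce₂ s(u, p)) ∈ G₀ :=
          hπF _ (Finset.mem_image_of_mem _ hpN)
        rw [hG₀, Finset.mem_sdiff] at hmem
        intro h
        exact hmem.2 (Finset.mem_insert_of_mem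
          (h.symm ▸ Finset.mem_image_of_mem _ hqN))
      · -- both outside
        have hp' := hAllout hup (fun hc => h1 ((hQ u p).mp hc))
        have hq' := hAllout huq (fun hc => h2 ((hQ u q).mp hc))
        rw [hceS₂ u p h1, hceS₂ u q h2]
        intro h
        have hlt1 : ce₂ s(u, p) < k := hbe₂ _ (hH₂ hup hp'.1 hp'.2)
        have hlt2 : ce₂ s(u, q) < k := hbe₂ _ (hH₂ huq hq'.1 hq'.2)
        exact hc₂.2.1 (hH₂ hup hp'.1 hp'.2) (hH₂ huq hq'.1 hq'.2) hpq
          (hπinj _ _ hlt1 hlt2 h)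
    · -- edge vs endpoints
      intro p q hadj
      by_cases h : (p ∈ A ∨ p = v) ∧ (q ∈ A ∨ q = v)
      · rw [hceS₁ p q h.1 h.2, hcvS₁ p h.1, hcvS₁ q h.2]
        exact hc₁.2.2 (hH₁ hadj h.1 h.2)
      · have h' := hAllout hadj (fun hc => h ((hQ p q).mp hc))
        rw [hceS₂ p q h]
        have hlt : ce₂ s(p, q) < k := hbe₂ _ (hH₂ hadj h'.1 h'.2)
        have hcc := hc₂.2.2 (hH₂ hadj h'.1 h'.2)
        constructor
        · by_cases hpv : p = v
          · subst hpv
            rw [hcvS₁ p (Or.inr rfl), ← hπd₀]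
            intro hEq
            exact hcc.1 (hπinj _ _ hlt (hbv₂ p) hEq)
          · rw [hcvS₂ p (by push_neg; exact ⟨h'.1, hpv⟩)]
            intro hEq
            exact hcc.1 (hπinj _ _ hlt (hbv₂ p) hEq)
        · by_cases hqv : q = v
          · subst hqv
            rw [hcvS₁ q (Or.inr rfl), ← hπd₀]
            intro hEq
            exact hcc.2 (hπinj _ _ hlt (hbv₂ q) hEq)
          · rw [hcvS₂ q (by push_neg; exact ⟨h'.2, hqv⟩)]
            intro hEq
            exact hcc.2 (hπinj _ _ hlt (hbv₂ q) hEq)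
    · -- vertex colors bounded
      intro u
      by_cases h : u ∈ A ∨ u = v
      · rw [hcvS₁ u h]; exact hbv₁ u
      · rw [hcvS₂ u h]; exact hπlt _ (hbv₂ u)
    · -- edge colors bounded
      intro e he
      induction e using Sym2.ind with
      | _ p q =>
        rw [SimpleGraph.mem_edgeSet] at he
        by_cases h : (p ∈ A ∨ p = v) ∧ (q ∈ A ∨ q = v)
        · rw [hceS₁ p q h.1 h.2]
          exact hbe₁ _ (hH₁ he h.1 h.2)
        · have h' := hAllout he (fun hc => h ((hQ p q).mp hc))
          rw [hceS₂ p q h]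
          exact hπlt _ (hbe₂ _ (hH₂ he h'.1 h'.2))
  omega
end

section
/- Let G be a connected simple graph on at least 3 vertices that is (Δ(G)+k)-total-critical for some integer k with 2 < k ≤ Δ(G). Then the minimum degree of G is at least k. -/
open SimpleGraph

lemma totalColoring_exists {V : Type*} [Fintype V] (G : SimpleGraph V) :
    ∃ k, ∃ cv ce, IsTotalColoring G cv ce ∧ (∀ v, cv v < k) ∧ ∀ e ∈ G.edgeSet, ce e < k := by
  classical
  let f : V ↪ ℕ := (Fintype.equivFin V).toEmbedding.trans Fin.valEmbedding
  let g : Sym2 V ↪ ℕ := (Fintype.equivFin (Sym2 V)).toEmbedding.trans Fin.valEmbedding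
  let cv : V → ℕ := fun v => 2 * f v
  let ce : Sym2 V → ℕ := fun e => 2 * g e + 1
  refine ⟨(Finset.univ.sup cv) + (Finset.univ.sup ce) + 1, cv, ce, ⟨?_, ?_, ?_⟩, ?_, ?_⟩
  · intro u v h hc
    simp only [cv] at hc
    exact h.ne (f.injective (by omega))
  · intro u v w _ _ hvw hc
    simp only [ce] at hc
    have hg : g s(u, v) = g s(u, w) := by omega
    exact hvw (Sym2.congr_right.mp (g.injective hg))
  · intro u v _
    constructor <;> simp [cv, ce] <;> omega
  · intro v
    have := Finset.le_sup (f := cv) (Finset.mem_univ v)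
    omega
  · intro e _
    have := Finset.le_sup (f := ce) (Finset.mem_univ e)
    omega

/-- a connected `(Δ(G)+k)`-total-critical graph on at least `3` vertices with
`2 < k ≤ Δ(G)` has minimum degree at least `k`. -/
theorem minDegree_of_totalCritical {V : Type*} [Fintype V] (G : SimpleGraph V)
    [DecidableRel G.Adj] (hcard : 3 ≤ Fintype.card V) (hconn : G.Connected)
    (k : ℕ) (hk2 : 2 < k) (hkD : k ≤ G.maxDegree)
    (hchi : totalChromaticNumber G = G.maxDegree + k)
    (hcrit : ∀ e ∈ G.edgeSet,
      totalChromaticNumber (G.deleteEdges {e}) ≤ G.maxDegree + k - 1) :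
    ∀ v : V, k ≤ G.degree v := by
  classical
  intro v
  by_contra hd
  push_neg at hd
  -- find a neighbor u of v
  have hne : ∃ u, G.Adj v u := by
    have : Nontrivial V := Fintype.one_lt_card_iff_nontrivial.mp (by omega)
    obtain ⟨w, hw⟩ := exists_ne v
    obtain ⟨p⟩ := hconn.preconnected v w
    cases p with
    | nil => exact absurd rfl hw
    | cons h _ => exact ⟨_, h⟩
  obtain ⟨u, hadj⟩ := hne
  have hvu : v ≠ u := hadj.ne
  set Δ := G.maxDegree with hΔ
  set t := Δ + k - 1 with ht
  have hdegu : G.degree u ≤ Δ := G.degree_le_maxDegree u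
  have hdegupos : 0 < G.degree u := G.degree_pos_iff_exists_adj u |>.mpr ⟨v, hadj.symm⟩
  have hdegvpos : 0 < G.degree v := G.degree_pos_iff_exists_adj v |>.mpr ⟨u, hadj⟩
  have he : s(v, u) ∈ G.edgeSet := hadj
  have hcrit' := hcrit _ he
  set G' := G.deleteEdges {s(v, u)} with hG'
  obtain ⟨k0, hk0⟩ := totalColoring_exists G'
  have hmem := Nat.sInf_mem (⟨k0, hk0⟩ : Set.Nonempty
    {m | ∃ cv ce, IsTotalColoring G' cv ce ∧ (∀ x, cv x < m) ∧ ∀ e ∈ G'.edgeSet, ce e < m})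
  obtain ⟨cv, ce, ⟨hc1, hc2, hc3⟩, hbv, hbe⟩ := hmem
  have hbv' : ∀ x, cv x < t := fun x => lt_of_lt_of_le (hbv x) hcrit'
  have hG'adj : ∀ x y : V, G'.Adj x y ↔ G.Adj x y ∧ s(x, y) ≠ s(v, u) := by
    intro x y; simp [hG', deleteEdges_adj]
  have hbe' : ∀ x y : V, G.Adj x y → s(x, y) ≠ s(v, u) → ce s(x, y) < t := by
    intro x y hxy hne'
    refine lt_of_lt_of_le (hbe _ ?_) hcrit'
    rw [hG', edgeSet_deleteEdges]
    exact ⟨hxy, by simpa using hne'⟩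
  -- forbidden colors for the edge s(v,u)
  set F : Finset ℕ := insert (cv u)
      ((((G.neighborFinset u).erase v).image fun w => ce s(u, w)) ∪
        (((G.neighborFinset v).erase u).image fun w => ce s(v, w))) with hF
  have hFcard : F.card < t := by
    have h1 := Finset.card_insert_le (cv u)
      ((((G.neighborFinset u).erase v).image fun w => ce s(u, w)) ∪
        (((G.neighborFinset v).erase u).image fun w => ce s(v, w)))
    have h2 := Finset.card_union_le
      (((G.neighborFinset u).erase v).image fun w => ce s(u, w))
      (((G.neighborFinset v).erase u).image fun w => ce s(v, w))
    have h3 := Finset.card_image_le (s := (G.neighborFinset u).erase v)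
      (f := fun w => ce s(u, w))
    have h4 := Finset.card_image_le (s := (G.neighborFinset v).erase u)
      (f := fun w => ce s(v, w))
    have h5 : ((G.neighborFinset u).erase v).card = G.degree u - 1 := by
      rw [Finset.card_erase_of_mem (by simpa using hadj.symm), card_neighborFinset_eq_degree]
    have h6 : ((G.neighborFinset v).erase u).card = G.degree v - 1 := by
      rw [Finset.card_erase_of_mem (by simpa using hadj), card_neighborFinset_eq_degree]
    rw [hF] at *
    omega
  obtain ⟨a, haR, haF⟩ : ∃ a, a ∈ Finset.range t ∧ a ∉ F := by
    have hle := Finset.le_card_sdiff F (Finset.range t)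
    rw [Finset.card_range] at hle
    have : 0 < (Finset.range t \ F).card := by omega
    obtain ⟨a, ha⟩ := Finset.card_pos.mp this
    rw [Finset.mem_sdiff] at ha
    exact ⟨a, ha.1, ha.2⟩
  set ce' : Sym2 V → ℕ := Function.update ce s(v, u) a with hce'
  have hceE : ce' s(v, u) = a := Function.update_self _ _ _
  have hceN : ∀ e, e ≠ s(v, u) → ce' e = ce e := fun e h => Function.update_of_ne h _ _
  -- forbidden colors for the vertex v
  set F2 : Finset ℕ := ((G.neighborFinset v).image cv) ∪
      ((G.neighborFinset v).image fun w => ce' s(v, w)) with hF2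
  have hF2card : F2.card < t := by
    have h2 := Finset.card_union_le ((G.neighborFinset v).image cv)
      ((G.neighborFinset v).image fun w => ce' s(v, w))
    have h3 := Finset.card_image_le (s := G.neighborFinset v) (f := cv)
    have h4 := Finset.card_image_le (s := G.neighborFinset v) (f := fun w => ce' s(v, w))
    have h5 : (G.neighborFinset v).card = G.degree v := card_neighborFinset_eq_degree _ _
    rw [hF2] at *
    omega
  obtain ⟨b, hbR, hbF⟩ : ∃ b, b ∈ Finset.range t ∧ b ∉ F2 := by
    have hle := Finset.le_card_sdiff F2 (Finset.range t)
    rw [Finset.card_range] at hle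
    have : 0 < (Finset.range t \ F2).card := by omega
    obtain ⟨b, hb⟩ := Finset.card_pos.mp this
    rw [Finset.mem_sdiff] at hb
    exact ⟨b, hb.1, hb.2⟩
  set cv' : V → ℕ := Function.update cv v b with hcv'
  have hcvv : cv' v = b := Function.update_self _ _ _
  have hcvN : ∀ x, x ≠ v → cv' x = cv x := fun x h => Function.update_of_ne h _ _
  -- helper memberships
  have hmemF_u : cv u ∈ F := Finset.mem_insert_self _ _
  have hmemF_eu : ∀ z, G.Adj u z → z ≠ v → ce s(u, z) ∈ F := by
    intro z hz hzv
    refine Finset.mem_insert_of_mem (Finset.mem_union_left _ (Finset.mem_image_of_mem _ ?_))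
    simp [Finset.mem_erase, hzv, hz]
  have hmemF_ev : ∀ z, G.Adj v z → z ≠ u → ce s(v, z) ∈ F := by
    intro z hz hzu
    refine Finset.mem_insert_of_mem (Finset.mem_union_right _ (Finset.mem_image_of_mem _ ?_))
    simp [Finset.mem_erase, hzu, hz]
  have hmemF2_cv : ∀ z, G.Adj v z → cv z ∈ F2 := by
    intro z hz
    exact Finset.mem_union_left _ (Finset.mem_image_of_mem _ (by simpa using hz))
  have hmemF2_ce : ∀ z, G.Adj v z → ce' s(v, z) ∈ F2 := by
    intro z hz
    exact Finset.mem_union_right _ (Finset.mem_image_of_mem _ (by simpa using hz))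
  -- the total coloring of G
  have hcol : IsTotalColoring G cv' ce' := by
    refine ⟨?_, ?_, ?_⟩
    · intro x y hxy hc
      by_cases hx : x = v
      · have hyv : y ≠ v := fun h => hxy.ne (hx.trans h.symm)
        rw [hx, hcvv, hcvN y hyv] at hc
        have hm : cv y ∈ F2 := hmemF2_cv y (by rwa [hx] at hxy)
        rw [← hc] at hm
        exact hbF hm
      · by_cases hyy : y = v
        · rw [hyy, hcvv, hcvN x hx] at hc
          have hm : cv x ∈ F2 := hmemF2_cv x (by rw [hyy] at hxy; exact hxy.symm)
          rw [hc] at hm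
          exact hbF hm
        · rw [hcvN x hx, hcvN y hyy] at hc
          have hne' : s(x, y) ≠ s(v, u) := by
            intro h
            rw [Sym2.eq_iff] at h
            rcases h with ⟨h1, _⟩ | ⟨_, h2⟩
            · exact hx h1
            · exact hyy h2
          exact hc1 ((hG'adj x y).mpr ⟨hxy, hne'⟩) hc
    · intro x y z hxy hxz hyz hc
      by_cases h1e : s(x, y) = s(v, u)
      · have h2e : s(x, z) ≠ s(v, u) := by
          intro h
          exact hyz (Sym2.congr_right.mp (h1e.trans h.symm))
        rw [h1e, hceE, hceN _ h2e] at hc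
        rw [Sym2.eq_iff] at h1e
        rcases h1e with ⟨rfl, rfl⟩ | ⟨rfl, rfl⟩
        · exact haF (hc ▸ hmemF_ev z hxz (fun h => hyz h.symm))
        · exact haF (hc ▸ hmemF_eu z hxz (fun h => hyz h.symm))
      · by_cases h2e : s(x, z) = s(v, u)
        · rw [h2e, hceE, hceN _ h1e] at hc
          rw [Sym2.eq_iff] at h2e
          rcases h2e with ⟨rfl, rfl⟩ | ⟨rfl, rfl⟩
          · exact haF (hc ▸ hmemF_ev y hxy (fun h => hyz h))
          · exact haF (hc ▸ hmemF_eu y hxy (fun h => hyz h))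
        · rw [hceN _ h1e, hceN _ h2e] at hc
          exact hc2 ((hG'adj x y).mpr ⟨hxy, h1e⟩) ((hG'adj x z).mpr ⟨hxz, h2e⟩) hyz hc
    · intro x y hxy
      by_cases h1e : s(x, y) = s(v, u)
      · rw [h1e, hceE]
        have key : a ≠ cv' v ∧ a ≠ cv' u := by
          constructor
          · rw [hcvv]
            intro h
            exact hbF (h ▸ hceE ▸ hmemF2_ce u hadj)
          · rw [hcvN u (Ne.symm hvu)]
            intro h
            exact haF (h ▸ hmemF_u)
        rw [Sym2.eq_iff] at h1e
        rcases h1e with ⟨rfl, rfl⟩ | ⟨rfl, rfl⟩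
        · exact key
        · exact ⟨key.2, key.1⟩
      · rw [hceN _ h1e]
        have hadj' : G'.Adj x y := (hG'adj x y).mpr ⟨hxy, h1e⟩
        constructor
        · by_cases hx : x = v
          · rw [hx, hcvv]
            intro h
            have hm : ce' s(v, y) ∈ F2 := hmemF2_ce y (by rwa [hx] at hxy)
            rw [hceN _ (by rw [hx] at h1e; exact h1e), h] at hm
            exact hbF hm
          · rw [hcvN x hx]
            exact (hc3 hadj').1
        · by_cases hy : y = v
          · rw [hy, hcvv]
            intro h
            have hm : ce' s(v, x) ∈ F2 := hmemF2_ce x (by rw [hy] at hxy; exact hxy.symm)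
            rw [hceN _ (by rw [hy] at h1e; rwa [Sym2.eq_swap] at h1e), Sym2.eq_swap, h] at hm
            exact hbF hm
          · rw [hcvN y hy]
            exact (hc3 hadj').2
  -- bounds and conclusion
  have hmemt : t ∈ {m | ∃ cv ce, IsTotalColoring G cv ce ∧ (∀ x, cv x < m) ∧
      ∀ e ∈ G.edgeSet, ce e < m} := by
    refine ⟨cv', ce', hcol, ?_, ?_⟩
    · intro x
      by_cases hx : x = v
      · subst hx; rw [hcvv]; exact Finset.mem_range.mp hbR
      · rw [hcvN x hx]; exact hbv' x
    · intro e heG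
      by_cases heq : e = s(v, u)
      · rw [heq, hceE]; exact Finset.mem_range.mp haR
      · rw [hceN _ heq]
        induction e with
        | h p q =>
          exact hbe' p q heG (by simpa using heq)
  have hle : totalChromaticNumber G ≤ t := Nat.sInf_le hmemt
  rw [hchi] at hle
  omega
end

section
/- Let G be a 2-vertex-connected simple finite graph and let v be a vertex of G. Then there exists a neighbour w of v such that {v, w} is not a separator of G, i.e., deleting both v and w from G leaves a connected graph. -/
open SimpleGraph

section Aux

variable {V : Type*}

private lemma exists_nonreach (G : SimpleGraph V) (s : Set V) (hne : Nonempty s)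
    (h : ¬(G.induce s).Connected) : ∃ a b : s, ¬ (G.induce s).Reachable a b := by
  rw [SimpleGraph.connected_iff] at h
  push_neg at h
  have hp : ¬ (G.induce s).Preconnected := fun hpre => (h hpre).false (Classical.choice hne)
  unfold SimpleGraph.Preconnected at hp
  push_neg at hp
  exact hp

/-- If a walk in `G.induce s` starts in `C` and ends outside, and edges leaving `C`
within `s` go only to `v`, then `v` has a neighbour in `C`. -/
private lemma lemA (G : SimpleGraph V) (s C : Set V) (v : V)
    (hclose : ∀ x ∈ C, ∀ y, G.Adj x y → y ∈ s → y ∉ C → y = v) :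
    ∀ {a b : s}, (G.induce s).Walk a b → (a : V) ∈ C → (b : V) ∉ C →
      ∃ u ∈ C, G.Adj v u := by
  intro a b p
  induction p with
  | nil => intro h1 h2; exact absurd h1 h2
  | @cons x y z h p ih =>
    intro hxC hzC
    by_cases hyC : (y : V) ∈ C
    · exact ih hyC hzC
    · have hadj : G.Adj (x : V) (y : V) := h
      have := hclose _ hxC _ hadj y.2 hyC
      exact ⟨x, hxC, by rw [← this]; exact hadj.symm⟩

/-- If a walk in `G.induce s₁` from `a ∉ C` to `w`, where `C` can only be exited to `w`
within `s₁`, and `s₁ \ C ⊆ s₂`, then `a` is reachable from `w` in `G.induce s₂`. -/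
private lemma lemB (G : SimpleGraph V) (s₁ s₂ C : Set V) (w : V)
    (henter : ∀ x ∈ C, ∀ y, G.Adj x y → y ∈ s₁ → y ∉ C → y = w)
    (hsub : ∀ x, x ∈ s₁ → x ∉ C → x ∈ s₂) :
    ∀ {a b : s₁}, (G.induce s₁).Walk a b → (a : V) ∉ C → (b : V) = w →
      ∀ (ha : (a : V) ∈ s₂) (hb : (b : V) ∈ s₂),
        (G.induce s₂).Reachable ⟨a, ha⟩ ⟨b, hb⟩ := by
  intro a b p
  induction p with
  | nil => intro _ _ ha hb; exact SimpleGraph.Reachable.refl _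
  | @cons x y z h p ih =>
    intro hxC hzw hx hz
    by_cases hyC : (y : V) ∈ C
    · have hadj : G.Adj (y : V) (x : V) := (h : G.Adj (x : V) (y : V)).symm
      have hxw : (x : V) = w := henter _ hyC _ hadj x.2 hxC
      have : (⟨x, hx⟩ : s₂) = ⟨z, hz⟩ := Subtype.ext (by rw [hxw, hzw])
      rw [this]
    · have hy : (y : V) ∈ s₂ := hsub _ y.2 hyC
      have hadj : (G.induce s₂).Adj ⟨(x : V), hx⟩ ⟨(y : V), hy⟩ := h
      exact (hadj.reachable).trans (ih hyC hzw hy hz)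

end Aux

/-- in a `2`-vertex-connected simple finite graph, every vertex `v` has a
neighbour `w` such that `{v, w}` is not a separator: deleting both leaves a connected
graph. -/
theorem exists_neighbour_not_separator {V : Type*} [Fintype V] (G : SimpleGraph V)
    (h2 : IsKConnected 2 G) (v : V) :
    ∃ w : V, G.Adj v w ∧ (G.induce (({v, w} : Set V)ᶜ)).Connected := by
  classical
  obtain ⟨hcard, hS⟩ := h2
  by_contra hcon
  push_neg at hcon
  -- basic facts
  have hthree : ∀ a b : V, ∃ z, z ≠ a ∧ z ≠ b := by
    intro a b
    by_contra h
    push_neg at h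
    have hsub : (Finset.univ : Finset V) ⊆ {a, b} := by
      intro z _
      by_cases hz : z = a
      · simp [hz]
      · simp [h z hz]
    have := Finset.card_le_card hsub
    have hle : Fintype.card V ≤ 2 := by
      calc Fintype.card V = (Finset.univ : Finset V).card := rfl
        _ ≤ ({a, b} : Finset V).card := this
        _ ≤ 2 := Finset.card_insert_le _ _ |>.trans (by simp)
    omega
  have hdel : ∀ x : V, (G.induce (({x} : Set V)ᶜ)).Connected := by
    intro x
    have := hS {x} (by simp)
    rw [Finset.coe_singleton] at this
    exact this
  have hGconn : G.Connected := by
    have h0 := hS ∅ (by norm_num)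
    have he : ((((∅ : Finset V) : Set V))ᶜ) = Set.univ := by simp
    rw [he] at h0
    exact h0.map (G.induceUnivIso).toHom (G.induceUnivIso).toEquiv.surjective
  -- v has a neighbour
  obtain ⟨z, hz, -⟩ := hthree v v
  obtain ⟨p0⟩ := hGconn.preconnected v z
  have hnbr : ∃ w, G.Adj v w := by
    cases p0 with
    | nil => exact absurd rfl hz.symm
    | cons h _ => exact ⟨_, h⟩
  obtain ⟨w0, hw0⟩ := hnbr
  -- trap construction from any neighbour
  have mkTrap : ∀ w, G.Adj v w → ∃ C : Set V,
      v ∉ C ∧ w ∉ C ∧ C.Nonempty ∧ (∃ b, b ∉ C ∧ b ≠ v ∧ b ≠ w) ∧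
      (∀ x ∈ C, ∀ y, G.Adj x y → y ∉ C → y = v ∨ y = w) := by
    intro w hw
    set s : Set V := ({v, w} : Set V)ᶜ with hs
    have hmem : ∀ x : V, x ∈ s ↔ x ≠ v ∧ x ≠ w := by
      intro x; simp [hs]
    have hne : Nonempty s := by
      obtain ⟨z', hz1, hz2⟩ := hthree v w
      exact ⟨⟨z', (hmem z').2 ⟨hz1, hz2⟩⟩⟩
    obtain ⟨a, b, hab⟩ := exists_nonreach G s hne (hcon w hw)
    refine ⟨{x | ∃ hx : x ∈ s, (G.induce s).Reachable a ⟨x, hx⟩}, ?_, ?_, ?_, ?_, ?_⟩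
    · rintro ⟨hv, -⟩
      exact ((hmem v).1 hv).1 rfl
    · rintro ⟨hw', -⟩
      exact ((hmem w).1 hw').2 rfl
    · exact ⟨a, a.2, by rw [Subtype.coe_eta]⟩
    · refine ⟨b, ?_, ((hmem b).1 b.2).1, ((hmem b).1 b.2).2⟩
      rintro ⟨hb, hr⟩
      rw [Subtype.coe_eta] at hr
      exact hab hr
    · rintro x ⟨hx, hr⟩ y hadj hyC
      by_contra hy
      push_neg at hy
      have hys : y ∈ s := (hmem y).2 hy
      have hadj' : (G.induce s).Adj ⟨x, hx⟩ ⟨y, hys⟩ := hadj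
      exact hyC ⟨hys, hr.trans hadj'.reachable⟩
  -- minimal trap
  set N : Set ℕ := {n | ∃ (w : V) (C : Set V), G.Adj v w ∧ v ∉ C ∧ w ∉ C ∧ C.Nonempty ∧
      (∃ b, b ∉ C ∧ b ≠ v ∧ b ≠ w) ∧
      (∀ x ∈ C, ∀ y, G.Adj x y → y ∉ C → y = v ∨ y = w) ∧ C.ncard = n} with hN
  have hNne : N.Nonempty := by
    obtain ⟨C, h1, h2, h3, h4, h5⟩ := mkTrap w0 hw0
    exact ⟨C.ncard, w0, C, hw0, h1, h2, h3, h4, h5, rfl⟩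
  obtain ⟨w, C, hw, hvC, hwC, ⟨a0, ha0⟩, ⟨b0, hb0C, hb0v, hb0w⟩, hclose, hcardC⟩ :=
    Nat.sInf_mem hNne
  -- Step A: v has a neighbour u inside C
  have hvw : v ≠ w := hw.ne
  have hstepA : ∃ u ∈ C, G.Adj v u := by
    set s₁ : Set V := ({w} : Set V)ᶜ with hs1
    have ha0s : a0 ∈ s₁ := by
      simp only [hs1, Set.mem_compl_iff, Set.mem_singleton_iff]
      rintro rfl; exact hwC ha0
    have hb0s : b0 ∈ s₁ := by
      simp only [hs1, Set.mem_compl_iff, Set.mem_singleton_iff]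
      exact hb0w
    obtain ⟨p⟩ := (hdel w).preconnected ⟨a0, ha0s⟩ ⟨b0, hb0s⟩
    refine lemA G s₁ C v ?_ p ha0 hb0C
    intro x hx y hadj hys hyC
    rcases hclose x hx y hadj hyC with h | h
    · exact h
    · exact absurd h (by simpa [hs1] using hys)
  obtain ⟨u, huC, hvu⟩ := hstepA
  -- Step B: find a strictly smaller trap for u
  set s₂ : Set V := ({v, u} : Set V)ᶜ with hs2
  have hmem2 : ∀ x : V, x ∈ s₂ ↔ x ≠ v ∧ x ≠ u := by
    intro x; simp [hs2]
  have hne2 : Nonempty s₂ := by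
    obtain ⟨z', hz1, hz2⟩ := hthree v u
    exact ⟨⟨z', (hmem2 z').2 ⟨hz1, hz2⟩⟩⟩
  obtain ⟨a', b', hab'⟩ := exists_nonreach G s₂ hne2 (hcon u hvu)
  have hws2 : w ∈ s₂ := (hmem2 w).2 ⟨hvw.symm, fun h => hwC (h ▸ huC)⟩
  set wS : s₂ := ⟨w, hws2⟩ with hwS
  -- every vertex of s₂ outside C reaches w in induce s₂
  have hreachW : ∀ x : s₂, (x : V) ∉ C → (G.induce s₂).Reachable x wS := by
    intro x hxC
    set s₁ : Set V := ({v} : Set V)ᶜ with hs1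
    have hxs1 : (x : V) ∈ s₁ := by
      simp only [hs1, Set.mem_compl_iff, Set.mem_singleton_iff]
      exact ((hmem2 _).1 x.2).1
    have hws1 : w ∈ s₁ := by
      simp only [hs1, Set.mem_compl_iff, Set.mem_singleton_iff]
      exact hvw.symm
    obtain ⟨p⟩ := (hdel v).preconnected ⟨(x : V), hxs1⟩ ⟨w, hws1⟩
    have henter : ∀ y ∈ C, ∀ t, G.Adj y t → t ∈ s₁ → t ∉ C → t = w := by
      intro y hy t hadj hts htC
      rcases hclose y hy t hadj htC with h | h
      · exact absurd h (by simpa [hs1] using hts)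
      · exact h
    have hsub : ∀ t, t ∈ s₁ → t ∉ C → t ∈ s₂ := by
      intro t hts htC
      refine (hmem2 t).2 ⟨by simpa [hs1] using hts, ?_⟩
      rintro rfl; exact htC huC
    have := lemB G s₁ s₂ C w henter hsub p hxC rfl x.2 hws2
    convert this using 2 <;> rw [Subtype.coe_eta]
  -- one of a', b' cannot reach w
  have hc' : ∃ c' : s₂, ¬ (G.induce s₂).Reachable c' wS := by
    by_cases h : (G.induce s₂).Reachable a' wS
    · refine ⟨b', fun hb => hab' (h.trans hb.symm)⟩
    · exact ⟨a', h⟩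
  obtain ⟨c', hc'⟩ := hc'
  have hc'C : (c' : V) ∈ C := by
    by_contra h
    exact hc' (hreachW c' h)
  -- the new trap
  set C' : Set V := {x | ∃ hx : x ∈ s₂, (G.induce s₂).Reachable c' ⟨x, hx⟩} with hC'
  have hC'subC : C' ⊆ C := by
    rintro x ⟨hx, hr⟩
    by_contra hxC
    exact hc' (hr.trans (hreachW ⟨x, hx⟩ hxC))
  have huC' : u ∉ C' := by
    rintro ⟨hu, -⟩
    exact ((hmem2 u).1 hu).2 rfl
  have hssub : C' ⊂ C := ⟨hC'subC, fun h => huC' (h huC)⟩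
  have hcard' : C'.ncard < C.ncard := Set.ncard_lt_ncard hssub (Set.toFinite C)
  have hC'trap : C'.ncard ∈ N := by
    refine ⟨u, C', hvu, ?_, huC', ⟨c', c'.2, by rw [Subtype.coe_eta]⟩, ?_, ?_, rfl⟩
    · rintro ⟨hv', -⟩
      exact ((hmem2 v).1 hv').1 rfl
    · refine ⟨w, ?_, hvw.symm, fun h => hwC (h ▸ huC)⟩
      rintro ⟨hws, hr⟩
      exact hc' (by rwa [hwS])
    · rintro x ⟨hx, hr⟩ y hadj hyC'
      by_contra hy
      push_neg at hy
      have hys : y ∈ s₂ := (hmem2 y).2 hy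
      have hadj' : (G.induce s₂).Adj ⟨x, hx⟩ ⟨y, hys⟩ := hadj
      exact hyC' ⟨hys, hr.trans hadj'.reachable⟩
  have := Nat.sInf_le hC'trap
  omega
end

section
/- For every simple finite graph G, the total chromatic number satisfies χ''(G) ≤ ch'(G) + 2, where ch'(G) is the edge choosability of G. -/
open SimpleGraph

def greedyCol (L N : ℕ → Finset ℕ) : ℕ → ℕ
  | i =>
    ((L i) \ ((Finset.range i ∩ N i).attach.image fun j => greedyCol L N j.1)).min.getD 0
termination_by i => i
decreasing_by exact Finset.mem_range.mp (Finset.mem_inter.mp j.2).1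

theorem greedyCol_spec (L N : ℕ → Finset ℕ) (i : ℕ)
    (h : (Finset.range i ∩ N i).card < (L i).card) :
    greedyCol L N i ∈ L i ∧
      ∀ j ∈ Finset.range i ∩ N i, greedyCol L N j ≠ greedyCol L N i := by
  set S := (Finset.range i ∩ N i).attach.image (fun j => greedyCol L N j.1) with hS
  have hcard : S.card ≤ (Finset.range i ∩ N i).card :=
    (Finset.card_image_le).trans (by simp)
  have hne : (L i \ S).Nonempty := by
    rw [← Finset.card_pos]
    have := Finset.le_card_sdiff S (L i)
    omega
  obtain ⟨a, ha⟩ := hne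
  have hmin : (L i \ S).min.getD 0 ∈ L i \ S := by
    obtain ⟨b, hb⟩ := Finset.min_of_mem ha
    rw [hb]
    exact Finset.mem_of_min hb
  have heq : greedyCol L N i = (L i \ S).min.getD 0 := by
    rw [greedyCol]
  rw [heq]
  obtain ⟨h1, h2⟩ := Finset.mem_sdiff.mp hmin
  refine ⟨h1, fun j hj hcontra => ?_⟩
  exact h2 (hS ▸ Finset.mem_image.mpr ⟨⟨j, hj⟩, Finset.mem_attach _ _, hcontra⟩)

/-- Greedy vertex coloring: a proper coloring with `cv v ≤ degree v`. -/
theorem exists_greedy_vertex_coloring {V : Type*} [Fintype V] [DecidableEq V]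
    (G : SimpleGraph V) [DecidableRel G.Adj] :
    ∃ cv : V → ℕ, (∀ ⦃u v⦄, G.Adj u v → cv u ≠ cv v) ∧ ∀ v, cv v ≤ G.degree v := by
  classical
  let n := Fintype.card V
  let σ : V ≃ Fin n := Fintype.equivFin V
  let L : ℕ → Finset ℕ := fun i =>
    if h : i < n then Finset.range (G.degree (σ.symm ⟨i, h⟩) + 1) else ∅
  let N : ℕ → Finset ℕ := fun i =>
    if h : i < n then (G.neighborFinset (σ.symm ⟨i, h⟩)).image (fun w => ((σ w : Fin n) : ℕ))
    else ∅
  have key : ∀ v : V, (Finset.range (σ v : ℕ) ∩ N (σ v)).card < (L (σ v)).card := by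
    intro v
    have hv : ((σ v : Fin n) : ℕ) < n := (σ v).2
    have hvv : σ.symm ⟨(σ v : ℕ), hv⟩ = v := by rw [Fin.eta]; exact σ.symm_apply_apply v
    have hL : L (σ v) = Finset.range (G.degree v + 1) := by
      simp only [L, dif_pos hv]
      rw [hvv]
    have hN : (N (σ v : ℕ)).card ≤ G.degree v := by
      simp only [N, dif_pos hv]
      calc _ ≤ (G.neighborFinset (σ.symm ⟨(σ v : ℕ), hv⟩)).card := Finset.card_image_le
        _ = G.degree v := by rw [hvv, G.card_neighborFinset_eq_degree]
    rw [hL, Finset.card_range]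
    have := Finset.card_le_card (Finset.inter_subset_right
      (s₁ := Finset.range (σ v : ℕ)) (s₂ := N (σ v)))
    omega
  refine ⟨fun v => greedyCol L N (σ v), ?_, ?_⟩
  · have main : ∀ ⦃u v⦄, G.Adj u v → ((σ u : Fin n) : ℕ) < ((σ v : Fin n) : ℕ) →
        greedyCol L N (σ u) ≠ greedyCol L N (σ v) := by
      intro u v huv hlt
      have hv : ((σ v : Fin n) : ℕ) < n := (σ v).2
      have hmem : ((σ u : Fin n) : ℕ) ∈ Finset.range (σ v : ℕ) ∩ N (σ v) := by
        refine Finset.mem_inter.mpr ⟨Finset.mem_range.mpr hlt, ?_⟩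
        simp only [N, dif_pos hv]
        refine Finset.mem_image.mpr ⟨u, ?_, rfl⟩
        have hvv : σ.symm ⟨(σ v : ℕ), hv⟩ = v := by rw [Fin.eta]; exact σ.symm_apply_apply v
        rw [SimpleGraph.mem_neighborFinset, hvv]
        exact huv.symm
      exact (greedyCol_spec L N _ (key v)).2 _ hmem
    intro u v huv
    rcases lt_trichotomy ((σ u : Fin n) : ℕ) ((σ v : Fin n) : ℕ) with h | h | h
    · exact main huv h
    · exact absurd (σ.injective (Fin.val_injective h)) huv.ne
    · exact (main huv.symm h).symm
  · intro v
    have := (greedyCol_spec L N _ (key v)).1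
    have hv : ((σ v : Fin n) : ℕ) < n := (σ v).2
    simp only [L, dif_pos hv] at this
    have hd : σ.symm ⟨(σ v : ℕ), hv⟩ = v := by rw [Fin.eta]; exact σ.symm_apply_apply v
    rw [hd, Finset.mem_range] at this
    simpa using Nat.lt_succ_iff.mp this

/-- `G` is `m`-edge-choosable where `m` is the number of edges. -/
theorem edgeChoosable_card {V : Type*} [Fintype V] [DecidableEq V]
    (G : SimpleGraph V) [DecidableRel G.Adj] :
    ∀ L : Sym2 V → Finset ℕ,
      (∀ e ∈ G.edgeSet, (L e).card = Fintype.card G.edgeSet) →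
      ∃ c : Sym2 V → ℕ,
        (∀ ⦃e f : G.edgeSet⦄, e ≠ f → c e ≠ c f) ∧ ∀ e ∈ G.edgeSet, c e ∈ L e := by
  classical
  intro L0 hL0
  set m := Fintype.card G.edgeSet with hm
  let τ : G.edgeSet ≃ Fin m := Fintype.equivFin G.edgeSet
  let L : ℕ → Finset ℕ := fun i =>
    if h : i < m then L0 (τ.symm ⟨i, h⟩) else ∅
  let N : ℕ → Finset ℕ := fun _ => Finset.range m
  have key : ∀ e : G.edgeSet, (Finset.range (τ e : ℕ) ∩ N (τ e)).card < (L (τ e)).card := by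
    intro e
    have he : ((τ e : Fin m) : ℕ) < m := (τ e).2
    have hL : (L (τ e : ℕ)).card = m := by
      simp only [L, dif_pos he]
      exact hL0 _ (τ.symm ⟨(τ e : ℕ), he⟩).2
    rw [hL]
    have := Finset.card_le_card (Finset.inter_subset_left
      (s₁ := Finset.range (τ e : ℕ)) (s₂ := N (τ e)))
    rw [Finset.card_range] at this
    omega
  refine ⟨fun e => if h : e ∈ G.edgeSet then greedyCol L N (τ ⟨e, h⟩) else 0, ?_, ?_⟩
  · intro e f hef
    simp only [Subtype.coe_eta, dif_pos e.2, dif_pos f.2, Subtype.coe_eta]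
    have hne : (τ e : ℕ) ≠ (τ f : ℕ) := by
      intro h
      exact hef (τ.injective (Fin.val_injective h))
    rcases hne.lt_or_gt with h | h
    · intro hc
      refine (greedyCol_spec L N _ (key f)).2 (τ e : ℕ) ?_ ?_
      · exact Finset.mem_inter.mpr ⟨Finset.mem_range.mpr h, Finset.mem_range.mpr (τ e).2⟩
      · simpa using hc
    · intro hc
      refine (greedyCol_spec L N _ (key e)).2 (τ f : ℕ) ?_ ?_
      · exact Finset.mem_inter.mpr ⟨Finset.mem_range.mpr h, Finset.mem_range.mpr (τ f).2⟩
      · simpa using hc.symm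
  · intro e he
    simp only [dif_pos he]
    have := (greedyCol_spec L N _ (key ⟨e, he⟩)).1
    have h2 : ((τ ⟨e, he⟩ : Fin m) : ℕ) < m := (τ ⟨e, he⟩).2
    simp only [L, dif_pos h2] at this
    have hd : τ.symm ⟨(τ (⟨e, he⟩ : G.edgeSet) : ℕ), h2⟩ = ⟨e, he⟩ := by
      rw [Fin.eta]; exact τ.symm_apply_apply _
    rw [hd] at this
    exact this

/-- for every simple finite graph `G`, `χ''(G) ≤ ch'(G) + 2`, where `ch'(G)`
is the edge choosability of `G`. -/
theorem totalChromaticNumber_le_edgeChoosability_add_two {V : Type*} [Fintype V]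
    (G : SimpleGraph V) :
    totalChromaticNumber G ≤ edgeChoosability G + 2 := by
  classical
  set k := edgeChoosability G with hkdef
  -- it suffices to exhibit a total coloring with colors < k + 2
  apply Nat.sInf_le
  by_cases hE : G.edgeSet = ∅
  · exact ⟨fun _ => 0, fun _ => 0,
      ⟨fun u v huv => absurd (G.mem_edgeSet.mpr huv) (by simp [hE]),
       fun u v w huv _ _ => absurd (G.mem_edgeSet.mpr huv) (by simp [hE]),
       fun u v huv => absurd (G.mem_edgeSet.mpr huv) (by simp [hE])⟩,
      fun v => by show (0:ℕ) < k + 2; omega,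
      fun e he => by show (0:ℕ) < k + 2; omega⟩
  · -- G has an edge
    have hchoos : EdgeChoosable G (Fintype.card G.edgeSet) := by
      intro L hL
      obtain ⟨c, hc1, hc2⟩ := edgeChoosable_card G L hL
      refine ⟨c, ?_, hc2⟩
      intro u v w huv huw hvw
      have h1 : s(u, v) ∈ G.edgeSet := G.mem_edgeSet.mpr huv
      have h2 : s(u, w) ∈ G.edgeSet := G.mem_edgeSet.mpr huw
      have : (⟨s(u, v), h1⟩ : G.edgeSet) ≠ ⟨s(u, w), h2⟩ := by
        simp only [ne_eq, Subtype.mk.injEq, Sym2.congr_right]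
        exact hvw
      exact hc1 this
    have hne : {n | EdgeChoosable G n}.Nonempty := ⟨_, hchoos⟩
    have hk : EdgeChoosable G k := Nat.sInf_mem hne
    -- max degree is at most k
    have hdeg : ∀ v, G.degree v ≤ k := by
      obtain ⟨c, hc1, hc2⟩ := hk (fun _ => Finset.range k) (fun _ _ => Finset.card_range k)
      intro v
      rw [← SimpleGraph.card_neighborFinset_eq_degree, ← Finset.card_range k]
      apply Finset.card_le_card_of_injOn (fun w => c s(v, w))
      · intro w hw
        rw [Finset.mem_coe, SimpleGraph.mem_neighborFinset] at hw
        exact hc2 _ (G.mem_edgeSet.mpr hw)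
      · intro w₁ hw₁ w₂ hw₂ hcc
        simp only [Finset.mem_coe, SimpleGraph.mem_neighborFinset] at hw₁ hw₂
        by_contra hne
        exact hc1 hw₁ hw₂ hne hcc
    -- greedy vertex coloring
    obtain ⟨cv, hcv1, hcv2⟩ := exists_greedy_vertex_coloring G
    have hcvlt : ∀ v, cv v < k + 2 := fun v => by have := (hcv2 v).trans (hdeg v); omega
    -- lists avoiding endpoint colors
    set S : Sym2 V → Finset ℕ :=
      fun e => (Finset.range (k + 2)).filter (fun x => ∀ u ∈ e, cv u ≠ x) with hSdef
    have hScard : ∀ e ∈ G.edgeSet, k ≤ (S e).card := by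
      intro e he
      induction e with
      | h u v =>
        have hsub : Finset.range (k + 2) \ {cv u, cv v} ⊆ S s(u, v) := by
          intro x hx
          rw [Finset.mem_sdiff] at hx
          rw [hSdef, Finset.mem_filter]
          refine ⟨hx.1, fun w hw => ?_⟩
          rw [Sym2.mem_iff] at hw
          intro hcc
          rcases hw with rfl | rfl <;> simp [← hcc] at hx
        calc k = (k + 2) - 2 := by omega
          _ ≤ (Finset.range (k + 2)).card - ({cv u, cv v} : Finset ℕ).card := by
              rw [Finset.card_range]
              have : ({cv u, cv v} : Finset ℕ).card ≤ 2 :=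
                (Finset.card_insert_le _ _).trans (by simp)
              omega
          _ ≤ (Finset.range (k + 2) \ {cv u, cv v}).card := Finset.le_card_sdiff _ _
          _ ≤ _ := Finset.card_le_card hsub
    set L : Sym2 V → Finset ℕ := fun e =>
      if h : k ≤ (S e).card then (Finset.exists_subset_card_eq (s := S e) (n := k) h).choose else ∅
      with hLdef
    have hLspec : ∀ e ∈ G.edgeSet, L e ⊆ S e ∧ (L e).card = k := by
      intro e he
      rw [hLdef]
      simp only [dif_pos (hScard e he)]
      exact (Finset.exists_subset_card_eq (s := S e) (n := k) (hScard e he)).choose_spec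
    obtain ⟨ce, hce1, hce2⟩ := hk L (fun e he => (hLspec e he).2)
    have hceS : ∀ e ∈ G.edgeSet, ce e ∈ S e := fun e he => (hLspec e he).1 (hce2 e he)
    refine ⟨cv, ce, ⟨hcv1, hce1, ?_⟩, hcvlt, ?_⟩
    · intro u v huv
      have := hceS s(u, v) (G.mem_edgeSet.mpr huv)
      rw [hSdef, Finset.mem_filter] at this
      exact ⟨(this.2 u (by simp)).symm, (this.2 v (by simp)).symm⟩
    · intro e he
      have := hceS e he
      rw [hSdef, Finset.mem_filter, Finset.mem_range] at this
      exact this.1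
end

section
/- Let H be a connected simple finite graph with a vertex v of degree Δ(H) such that H − v is connected. Then the total graph T(H) contains a clique minor of order Δ(H) + 2. -/
open SimpleGraph

lemma totalGraph_adj_inl_inl {V : Type*} (H : SimpleGraph V) {u w : V} :
    (totalGraph H).Adj (Sum.inl u) (Sum.inl w) ↔ H.Adj u w := by
  simp only [totalGraph, fromRel_adj]
  constructor
  · rintro ⟨-, h | h⟩
    · exact h
    · exact h.symm
  · intro h
    exact ⟨fun he => h.ne (Sum.inl_injective he), Or.inl h⟩

lemma totalGraph_adj_inl_inr {V : Type*} (H : SimpleGraph V) {u : V} {e : H.edgeSet}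
    (h : u ∈ (e : Sym2 V)) : (totalGraph H).Adj (Sum.inl u) (Sum.inr e) := by
  simp only [totalGraph, fromRel_adj]
  exact ⟨by simp, Or.inl h⟩

lemma totalGraph_adj_inr_inr {V : Type*} (H : SimpleGraph V) {e f : H.edgeSet} (hne : e ≠ f)
    {u : V} (he : u ∈ (e : Sym2 V)) (hf : u ∈ (f : Sym2 V)) :
    (totalGraph H).Adj (Sum.inr e) (Sum.inr f) := by
  simp only [totalGraph, fromRel_adj]
  exact ⟨fun h => hne (Sum.inr_injective h), Or.inl ⟨u, he, hf⟩⟩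

lemma connected_induce_singleton_s16 {W : Type*} (G : SimpleGraph W) (a : W) :
    (G.induce ({a} : Set W)).Connected := by
  haveI : Nonempty ({a} : Set W) := ⟨⟨a, rfl⟩⟩
  refine ⟨fun x y => ?_⟩
  have hx : (x : W) = a := x.2
  have hy : (y : W) = a := y.2
  have hxy : x = y := Subtype.ext (hx.trans hy.symm)
  exact hxy ▸ SimpleGraph.Reachable.refl _

lemma connected_induce_inl_image {V : Type*} (H : SimpleGraph V)
    (s : Set V) (hs : (H.induce s).Connected) :
    ((totalGraph H).induce (Sum.inl '' s : Set (V ⊕ H.edgeSet))).Connected := by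
  refine SimpleGraph.Connected.map ⟨fun x => ⟨Sum.inl x.1, ⟨x.1, x.2, rfl⟩⟩, ?_⟩ ?_ hs
  · intro a b hab
    exact (totalGraph_adj_inl_inl H).mpr hab
  · rintro ⟨y, a, ha, rfl⟩
    exact ⟨⟨a, ha⟩, rfl⟩

/-- if `H` is a connected simple finite graph with a vertex `v` of maximum
degree such that `H - v` is connected, then `T(H)` has a clique minor of order
`Δ(H) + 2`. -/
theorem totalGraph_hasCliqueMinor_of_maxDegree_vertex {V : Type*} [Fintype V]
    (H : SimpleGraph V) [DecidableRel H.Adj] (hconn : H.Connected) (v : V)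
    (hdeg : H.degree v = H.maxDegree)
    (hdel : (H.induce ({v}ᶜ : Set V)).Connected) :
    HasCliqueMinor (totalGraph H) (H.maxDegree + 2) := by
  classical
  rw [← hdeg]
  obtain ⟨⟨w0, hw0⟩⟩ := hdel.nonempty
  have hw0v : w0 ≠ v := hw0
  have hex : ∃ w, H.Adj v w := by
    obtain ⟨p⟩ := hconn.preconnected v w0
    cases p with
    | nil => exact absurd rfl hw0v
    | cons h q => exact ⟨_, h⟩
  have hdpos : 0 < H.degree v := (H.degree_pos_iff_exists_adj v).mpr hex
  have hcard : (H.neighborFinset v).card = H.degree v := rfl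
  let enb : Fin (H.degree v) ≃ H.neighborFinset v := (Finset.equivFinOfCardEq hcard).symm
  let nb : Fin (H.degree v) → V := fun k => (enb k : V)
  have hadjnb : ∀ k, H.Adj v (nb k) := fun k => (H.mem_neighborFinset v (nb k)).mp (enb k).2
  have hnbv : ∀ k, nb k ≠ v := fun k h => H.irrefl (h ▸ hadjnb k)
  have hnbinj : Function.Injective nb := fun a b h => enb.injective (Subtype.ext h)
  let eE : Fin (H.degree v) → H.edgeSet := fun k => ⟨s(v, nb k), (H.mem_edgeSet).mpr (hadjnb k)⟩
  have heEinj : Function.Injective eE := by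
    intro a b h
    have h2 : s(v, nb a) = s(v, nb b) := congrArg Subtype.val h
    exact hnbinj (Sym2.congr_right.mp h2)
  have hveE : ∀ k, v ∈ ((eE k : H.edgeSet) : Sym2 V) := fun k => Sym2.mem_mk_left _ _
  have hnbeE : ∀ k, nb k ∈ ((eE k : H.edgeSet) : Sym2 V) := fun k => Sym2.mem_mk_right _ _
  set B : Fin (H.degree v + 2) → Set (V ⊕ H.edgeSet) := fun i =>
    if h : (i : ℕ) < H.degree v then {Sum.inr (eE ⟨i, h⟩)}
    else if (i : ℕ) = H.degree v then {Sum.inl v}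
    else Sum.inl '' ({v}ᶜ : Set V) with hB
  have hdisj : ∀ i j : Fin (H.degree v + 2), (i : ℕ) < (j : ℕ) → Disjoint (B i) (B j) := by
    intro i j hij
    rw [hB]
    dsimp only
    by_cases hj : (j : ℕ) < H.degree v
    · have hi : (i : ℕ) < H.degree v := hij.trans hj
      rw [dif_pos hi, dif_pos hj, Set.disjoint_singleton]
      intro h
      exact absurd (congrArg Fin.val (heEinj (Sum.inr_injective h))) hij.ne
    · by_cases hj' : (j : ℕ) = H.degree v
      · have hi : (i : ℕ) < H.degree v := by omega
        rw [dif_pos hi, dif_neg hj, if_pos hj', Set.disjoint_singleton]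
        simp
      · rw [dif_neg hj, if_neg hj']
        by_cases hi : (i : ℕ) < H.degree v
        · rw [dif_pos hi, Set.disjoint_left]
          rintro x hx ⟨a, ha, rfl⟩
          simp at hx
        · by_cases hi' : (i : ℕ) = H.degree v
          · rw [dif_neg hi, if_pos hi', Set.disjoint_left]
            rintro x hx ⟨a, ha, rfl⟩
            simp only [Set.mem_singleton_iff] at hx
            exact ha (Sum.inl_injective hx)
          · have := j.isLt
            omega
  have key : ∀ i j : Fin (H.degree v + 2), (i : ℕ) < (j : ℕ) →
      ∃ a ∈ B i, ∃ b ∈ B j, (totalGraph H).Adj a b := by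
    intro i j hij
    rw [hB]
    dsimp only
    by_cases hj : (j : ℕ) < H.degree v
    · have hi : (i : ℕ) < H.degree v := hij.trans hj
      rw [dif_pos hi, dif_pos hj]
      refine ⟨_, rfl, _, rfl, totalGraph_adj_inr_inr H ?_ (hveE ⟨i, hi⟩) (hveE ⟨j, hj⟩)⟩
      intro h
      exact absurd (congrArg Fin.val (heEinj h)) hij.ne
    · by_cases hj' : (j : ℕ) = H.degree v
      · have hi : (i : ℕ) < H.degree v := by omega
        rw [dif_pos hi, dif_neg hj, if_pos hj']
        exact ⟨_, rfl, _, rfl, (totalGraph_adj_inl_inr H (hveE ⟨i, hi⟩)).symm⟩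
      · rw [dif_neg hj, if_neg hj']
        by_cases hi : (i : ℕ) < H.degree v
        · rw [dif_pos hi]
          exact ⟨_, rfl, Sum.inl (nb ⟨i, hi⟩), ⟨nb ⟨i, hi⟩, hnbv _, rfl⟩,
            (totalGraph_adj_inl_inr H (hnbeE ⟨i, hi⟩)).symm⟩
        · have hi' : (i : ℕ) = H.degree v := by
            have := j.isLt
            omega
          rw [dif_neg hi, if_pos hi']
          exact ⟨Sum.inl v, rfl, Sum.inl (nb ⟨0, hdpos⟩), ⟨nb ⟨0, hdpos⟩, hnbv _, rfl⟩,
            (totalGraph_adj_inl_inl H).mpr (hadjnb _)⟩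
  refine ⟨B, ?_, ?_, ?_, ?_⟩
  · intro i
    rw [hB]
    dsimp only
    by_cases hi : (i : ℕ) < H.degree v
    · rw [dif_pos hi]
      exact ⟨_, rfl⟩
    · rw [dif_neg hi]
      by_cases hi' : (i : ℕ) = H.degree v
      · rw [if_pos hi']
        exact ⟨_, rfl⟩
      · rw [if_neg hi']
        exact ⟨Sum.inl w0, ⟨w0, hw0, rfl⟩⟩
  · intro i j hij
    rcases hij.lt_or_gt with h | h
    · exact hdisj i j h
    · exact (hdisj j i h).symm
  · intro i
    rw [hB]
    dsimp only
    by_cases hi : (i : ℕ) < H.degree v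
    · rw [dif_pos hi]
      exact connected_induce_singleton_s16 _ _
    · rw [dif_neg hi]
      by_cases hi' : (i : ℕ) = H.degree v
      · rw [if_pos hi']
        exact connected_induce_singleton_s16 _ _
      · rw [if_neg hi']
        exact connected_induce_inl_image H _ hdel
  · intro i j hij
    rcases hij.lt_or_gt with h | h
    · exact key i j h
    · obtain ⟨a, ha, b, hb, hab⟩ := key j i h
      exact ⟨b, hb, a, ha, hab.symm⟩
end
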